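/- arXiv:2112.07439 — 3 statements merged into one kernel-verified Lean document; each statement's English description precedes it below -/
import Mathlib

section
/- Let G be a connected finite simple graph, let L be a list-assignment for G, and fix a vertex v ∈ V(G) with |L(v)| > deg_G(v). Let G' := G − v and let L' denote the restriction of L to V(G'). If G' is L'-swappable, then G is L-swappable. -/
open SimpleGraph
open scoped Classical

/-- `φ` is a proper coloring of `G` choosing colors from the lists `L`. -/
def IsLColoring {V : Type*} (G : SimpleGraph V) (L : V → Finset ℕ) (φ : V → ℕ) : Prop :=
  (∀ v, φ v ∈ L v) ∧ ∀ ⦃u w : V⦄, G.Adj u w → φ u ≠ φ w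

/-- The subgraph of `G` induced by the vertices colored `α` or `β` under `φ`. -/
def kempeGraph {V : Type*} (G : SimpleGraph V) (φ : V → ℕ) (α β : ℕ) : SimpleGraph V where
  Adj u w := G.Adj u w ∧ (φ u = α ∨ φ u = β) ∧ (φ w = α ∨ φ w = β)
  symm := ⟨fun u w h => ⟨h.1.symm, h.2.2, h.2.1⟩⟩
  loopless := ⟨fun u h => G.loopless.irrefl u h.1⟩

/-- The coloring obtained from `φ` by interchanging colors `α` and `β` on the
connected component, containing `x`, of the subgraph induced by the vertices
colored `α` or `β`. -/
noncomputable def kempeSwap {V : Type*} (G : SimpleGraph V) (φ : V → ℕ) (α β : ℕ)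
    (x : V) : V → ℕ :=
  fun v =>
    if (kempeGraph G φ α β).Reachable x v ∧ φ v = α then β
    else if (kempeGraph G φ α β).Reachable x v ∧ φ v = β then α
    else φ v

/-- `ψ` is obtained from the `L`-coloring `φ` by a single `L`-valid Kempe swap. -/
def KempeStep {V : Type*} (G : SimpleGraph V) (L : V → Finset ℕ) (φ ψ : V → ℕ) : Prop :=
  IsLColoring G L φ ∧ IsLColoring G L ψ ∧ ∃ α β x, ψ = kempeSwap G φ α β x

/-- Two colorings are `L`-equivalent if one can be obtained from the other by a
sequence of `L`-valid Kempe swaps. -/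
def LEquiv {V : Type*} (G : SimpleGraph V) (L : V → Finset ℕ) :
    (V → ℕ) → (V → ℕ) → Prop :=
  Relation.ReflTransGen (KempeStep G L)

/-- `G` has an `L`-coloring and all of its `L`-colorings are pairwise `L`-equivalent. -/
def LSwappable {V : Type*} (G : SimpleGraph V) (L : V → Finset ℕ) : Prop :=
  (∃ φ, IsLColoring G L φ) ∧
    ∀ φ ψ, IsLColoring G L φ → IsLColoring G L ψ → LEquiv G L φ ψ

/-- The degree of the vertex `v` in `G`. -/
noncomputable def gdeg {V : Type*} (G : SimpleGraph V) (v : V) : ℕ :=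
  (G.neighborSet v).ncard

/-- `G` is `L`-swappable for every degree-assignment `L`. -/
def DegreeSwappable {V : Type*} (G : SimpleGraph V) : Prop :=
  ∀ L : V → Finset ℕ, (∀ v, (L v).card = gdeg G v) → LSwappable G L

/-- `G` has an `L`-coloring for every degree-assignment `L`. -/
def DegreeChoosable {V : Type*} (G : SimpleGraph V) : Prop :=
  ∀ L : V → Finset ℕ, (∀ v, (L v).card = gdeg G v) → ∃ φ, IsLColoring G L φ

/-- `G` is `L`-swappable for every `k`-assignment `L`. -/
def KSwappable {V : Type*} (G : SimpleGraph V) (k : ℕ) : Prop :=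
  ∀ L : V → Finset ℕ, (∀ v, (L v).card = k) → LSwappable G L

/-- `G` is `L`-swappable for every `f`-assignment `L`. -/
def FSwappable {V : Type*} (G : SimpleGraph V) (f : V → ℕ) : Prop :=
  ∀ L : V → Finset ℕ, (∀ v, (L v).card = f v) → LSwappable G L

section Helpers

variable {V : Type*}

private lemma memS {u v : V} (h : u ≠ v) : u ∈ ({v}ᶜ : Set V) := h

private lemma neS {u v : V} (h : u ∈ ({v}ᶜ : Set V)) : u ≠ v := h

private lemma kempeGraph_comm (G : SimpleGraph V) (φ : V → ℕ) (α β : ℕ) :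
    kempeGraph G φ α β = kempeGraph G φ β α := by
  ext u w; simp only [kempeGraph]; tauto

private lemma kempeSwap_comm (G : SimpleGraph V) (φ : V → ℕ) (α β : ℕ) (x : V) :
    kempeSwap G φ α β x = kempeSwap G φ β α x := by
  funext u
  simp only [kempeSwap, kempeGraph_comm G φ α β]
  by_cases hr : (kempeGraph G φ β α).Reachable x u
  · simp only [kempeGraph_comm G φ α β, hr, true_and]
    split_ifs <;> omega
  · simp [kempeGraph_comm G φ α β, hr]

private lemma reach_eq_of_no_adj {G : SimpleGraph V} {v : V} (h : ∀ w, ¬ G.Adj v w)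
    {u : V} (hr : G.Reachable v u) : u = v := by
  obtain ⟨p⟩ := hr
  cases p with
  | nil => rfl
  | cons hadj q => exact absurd hadj (h _)

private lemma kempeSwap_apply_cases (G : SimpleGraph V) (φ : V → ℕ) (α β : ℕ) (x u : V) :
    (¬((kempeGraph G φ α β).Reachable x u ∧ (φ u = α ∨ φ u = β)) ∧ kempeSwap G φ α β x u = φ u)
    ∨ ((kempeGraph G φ α β).Reachable x u ∧
        ((φ u = α ∧ kempeSwap G φ α β x u = β) ∨ (φ u = β ∧ kempeSwap G φ α β x u = α))) := by
  simp only [kempeSwap]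
  split_ifs with h1 h2
  · exact Or.inr ⟨h1.1, Or.inl ⟨h1.2, rfl⟩⟩
  · exact Or.inr ⟨h2.1, Or.inr ⟨h2.2, rfl⟩⟩
  · left
    refine ⟨?_, rfl⟩
    rintro ⟨hr, hα | hβ⟩
    exacts [h1 ⟨hr, hα⟩, h2 ⟨hr, hβ⟩]

private lemma recolor_step (G : SimpleGraph V) (L : V → Finset ℕ) {φ : V → ℕ}
    (hφ : IsLColoring G L φ) (v : V) {c : ℕ} (hc : c ∈ L v)
    (hn : ∀ w, G.Adj v w → φ w ≠ c) :
    KempeStep G L φ (Function.update φ v c) := by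
  have hiso : ∀ w, ¬ (kempeGraph G φ (φ v) c).Adj v w := by
    intro w hw
    rcases hw.2.2 with h | h
    · exact hφ.2 hw.1 h.symm
    · exact hn w hw.1 h
  have hswap : Function.update φ v c = kempeSwap G φ (φ v) c v := by
    funext u
    by_cases hu : u = v
    · subst hu
      rw [Function.update_self]
      unfold kempeSwap
      rw [if_pos ⟨Reachable.refl _, rfl⟩]
    · have hnr : ¬ (kempeGraph G φ (φ v) c).Reachable v u :=
        fun hr => hu (reach_eq_of_no_adj hiso hr)
      simp [kempeSwap, Function.update_of_ne hu, hnr]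
  have hcol : IsLColoring G L (Function.update φ v c) := by
    constructor
    · intro u
      by_cases hu : u = v
      · subst hu; simpa using hc
      · simpa [Function.update_of_ne hu] using hφ.1 u
    · intro u w hadj
      by_cases hu : u = v <;> by_cases hw' : w = v
      · subst hu; subst hw'; exact absurd hadj (G.loopless.irrefl _)
      · subst hu
        rw [Function.update_self, Function.update_of_ne hw']
        exact fun h => hn w hadj h.symm
      · subst hw'
        rw [Function.update_of_ne hu, Function.update_self]
        exact hn u hadj.symm
      · rw [Function.update_of_ne hu, Function.update_of_ne hw']
        exact hφ.2 hadj
  exact ⟨hφ, hcol, φ v, c, v, hswap⟩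

private lemma restrict_coloring {G : SimpleGraph V} {L : V → Finset ℕ} {φ : V → ℕ}
    (hφ : IsLColoring G L φ) (v : V) :
    IsLColoring (G.induce ({v}ᶜ : Set V)) (fun x => L x.1) (fun x => φ x.1) :=
  ⟨fun u => hφ.1 u.1, fun u w h => hφ.2 h⟩

private lemma kempe_induce (G : SimpleGraph V) (φ : V → ℕ) (α β : ℕ) (s : Set V) :
    kempeGraph (G.induce s) (fun x => φ x.1) α β = (kempeGraph G φ α β).induce s := rfl

private lemma reach_up {H : SimpleGraph V} {s : Set V} {u w : s}
    (h : (H.induce s).Reachable u w) : H.Reachable u w :=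
  h.map ⟨Subtype.val, fun ha => ha⟩

private lemma reach_down {H : SimpleGraph V} {v : V} :
    ∀ {u w : V} (p : H.Walk u w), (∀ y ∈ p.support, y ≠ v) →
    ∀ (hu : u ∈ ({v}ᶜ : Set V)) (hw : w ∈ ({v}ᶜ : Set V)),
      (H.induce ({v}ᶜ : Set V)).Reachable ⟨u, hu⟩ ⟨w, hw⟩ := by
  intro u w p
  induction p with
  | nil => intro _ hu hw; exact Reachable.refl _
  | @cons a b c h q ih =>
    intro hs hu hw
    have hb : b ∈ ({v}ᶜ : Set V) := memS (hs b (by simp))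
    exact (SimpleGraph.Adj.reachable
      (show (H.induce ({v}ᶜ : Set V)).Adj ⟨a, hu⟩ ⟨b, hb⟩ from h)).trans
      (ih (fun y hy => hs y (by simp [hy])) hb hw)

private lemma exists_snd {H : SimpleGraph V} {a b : V} (p : H.Walk a b) (hab : a ≠ b) :
    ∃ y, H.Adj a y ∧ y ∈ p.support.tail := by
  cases p with
  | nil => exact absurd rfl hab
  | cons h q => exact ⟨_, h, by simp⟩

private lemma safe_of_deg_one {H : SimpleGraph V} {v u₀ : V}
    (hdeg : ∀ w, H.Adj v w → w = u₀) {x u : V} (hx : x ≠ v) (hu : u ≠ v)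
    (p : H.Walk x u) (hp : p.IsPath) : v ∉ p.support := by
  intro hv
  obtain ⟨y, hy, hymem⟩ := exists_snd (p.dropUntil v hv) (fun h => hu h.symm)
  have hyu : y = u₀ := hdeg y hy
  obtain ⟨z, hz, hzmem⟩ := exists_snd (p.takeUntil v hv).reverse (fun h => hx h.symm)
  have hzu : z = u₀ := hdeg z hz
  have hq : u₀ ∈ (p.takeUntil v hv).support := by
    have h1 := List.mem_of_mem_tail hzmem
    rw [SimpleGraph.Walk.support_reverse, List.mem_reverse] at h1
    rwa [hzu] at h1
  have hr : u₀ ∈ (p.dropUntil v hv).support.tail := hyu ▸ hymem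
  have hnd := hp.support_nodup
  rw [← p.take_spec hv, SimpleGraph.Walk.support_append, List.nodup_append] at hnd
  exact hnd.2.2 u₀ hq u₀ hr rfl

private lemma reach_transfer {H : SimpleGraph V} {v : V} {x u : V}
    (hx : x ∈ ({v}ᶜ : Set V)) (hu : u ∈ ({v}ᶜ : Set V))
    (hsafe : ∀ (p : H.Walk x u), p.IsPath → v ∉ p.support) :
    H.Reachable x u ↔ (H.induce ({v}ᶜ : Set V)).Reachable ⟨x, hx⟩ ⟨u, hu⟩ := by
  constructor
  · rintro ⟨p⟩
    exact reach_down p.bypass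
      (fun y hy hyv => hsafe p.bypass p.bypass_isPath (by rwa [hyv] at hy)) hx hu
  · exact reach_up

private lemma swap_restrict_eq {G : SimpleGraph V} {φ : V → ℕ} {α β : ℕ} {v : V}
    {x u : ({v}ᶜ : Set V)}
    (hiff : (kempeGraph G φ α β).Reachable ↑x ↑u ↔
      (kempeGraph (G.induce ({v}ᶜ : Set V)) (fun y => φ y.1) α β).Reachable x u) :
    kempeSwap G φ α β ↑x ↑u = kempeSwap (G.induce ({v}ᶜ : Set V)) (fun y => φ y.1) α β x u := by
  simp only [kempeSwap]
  rw [if_congr (and_congr_left' hiff) rfl rfl, if_congr (and_congr_left' hiff) rfl rfl]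

end Helpers

section Cases

variable {V : Type*}

/-- Case A : `v` is not reachable from `x` in the Kempe graph, so the swap in `G`
restricts to the swap in `G - v`. -/
private lemma lift_caseA (G : SimpleGraph V) (L : V → Finset ℕ) (v : V)
    {φ : V → ℕ} (hφ : IsLColoring G L φ) (α β : ℕ) (x : ({v}ᶜ : Set V))
    (hre : ¬ (kempeGraph G φ α β).Reachable ↑x v)
    (hρ' : IsLColoring (G.induce ({v}ᶜ : Set V)) (fun y => L y.1)
      (kempeSwap (G.induce ({v}ᶜ : Set V)) (fun y => φ y.1) α β x)) :
    KempeStep G L φ (kempeSwap G φ α β ↑x) ∧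
      ∀ u : ({v}ᶜ : Set V), kempeSwap G φ α β ↑x ↑u =
        kempeSwap (G.induce ({v}ᶜ : Set V)) (fun y => φ y.1) α β x u := by
  set Kg := kempeGraph G φ α β with hKg
  have hiff : ∀ u : ({v}ᶜ : Set V), Kg.Reachable ↑x ↑u ↔
      (kempeGraph (G.induce ({v}ᶜ : Set V)) (fun y => φ y.1) α β).Reachable x u := by
    intro u
    rw [kempe_induce]
    exact reach_transfer x.2 u.2
      (fun p _ hvp => hre ⟨p.takeUntil v hvp⟩)
  have hrest : ∀ u : ({v}ᶜ : Set V), kempeSwap G φ α β ↑x ↑u =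
      kempeSwap (G.induce ({v}ᶜ : Set V)) (fun y => φ y.1) α β x u :=
    fun u => swap_restrict_eq (hiff u)
  have hvval : kempeSwap G φ α β ↑x v = φ v := by
    simp only [kempeSwap]
    rw [if_neg (fun h => hre h.1), if_neg (fun h => hre h.1)]
  -- key : neighbors of v keep color distinct from `φ v`
  have hkey : ∀ w, G.Adj v w → kempeSwap G φ α β ↑x w ≠ φ v := by
    intro w hw
    rcases kempeSwap_apply_cases G φ α β ↑x w with ⟨-, heq⟩ | ⟨hrw, hc⟩
    · rw [heq]; exact fun h => hφ.2 hw h.symm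
    · -- w was swapped; then φ v ∉ {α, β} (else v would be reachable)
      have hvnot : ¬ (φ v = α ∨ φ v = β) := by
        intro hvab
        exact hre (hrw.trans (SimpleGraph.Adj.reachable
          ⟨hw.symm, by tauto, hvab⟩))
      rcases hc with ⟨-, heq⟩ | ⟨-, heq⟩ <;> rw [heq] <;>
        exact fun h => hvnot (by tauto)
  have hcol : IsLColoring G L (kempeSwap G φ α β ↑x) := by
    constructor
    · intro u
      by_cases hu : u = v
      · subst hu; rw [hvval]; exact hφ.1 _
      · rw [show u = ((⟨u, memS hu⟩ : ({v}ᶜ : Set V)) : V) from rfl, hrest ⟨u, memS hu⟩]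
        exact hρ'.1 ⟨u, memS hu⟩
    · intro a b hadj
      by_cases ha : a = v <;> by_cases hb : b = v
      · subst ha; subst hb; exact absurd hadj (G.loopless.irrefl _)
      · subst ha
        rw [hvval]
        exact fun h => hkey b hadj h.symm
      · subst hb
        rw [hvval]
        exact hkey a hadj.symm
      · rw [show a = ((⟨a, memS ha⟩ : ({v}ᶜ : Set V)) : V) from rfl,
          show b = ((⟨b, memS hb⟩ : ({v}ᶜ : Set V)) : V) from rfl,
          hrest ⟨a, memS ha⟩, hrest ⟨b, memS hb⟩]
        exact hρ'.2 (show (G.induce ({v}ᶜ : Set V)).Adj ⟨a, memS ha⟩ ⟨b, memS hb⟩ from hadj)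
  exact ⟨⟨hφ, hcol, α, β, ↑x, rfl⟩, hrest⟩

end Cases

section CaseB2

variable {V : Type*} [Fintype V]

private lemma gdeg_eq (G : SimpleGraph V) (v : V) :
    gdeg G v = (G.neighborSet v).toFinset.card := by
  rw [gdeg, Set.ncard_eq_toFinset_card']

/-- Case B2 : `v` is reachable from `x`, colored `α`, and every color of `L v`
other than `α, β` appears on a neighbor of `v`. -/
private lemma lift_caseB2 (G : SimpleGraph V) (L : V → Finset ℕ) (v : V)
    (hv : gdeg G v < (L v).card)
    {φ : V → ℕ} (hφ : IsLColoring G L φ) (α β : ℕ) (hab : α ≠ β) (hvα : φ v = α)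
    (x : ({v}ᶜ : Set V))
    (hre : (kempeGraph G φ α β).Reachable ↑x v)
    (hγ : ∀ γ ∈ L v, γ ≠ α → γ ≠ β → ∃ w, G.Adj v w ∧ φ w = γ)
    (hρ' : IsLColoring (G.induce ({v}ᶜ : Set V)) (fun y => L y.1)
      (kempeSwap (G.induce ({v}ᶜ : Set V)) (fun y => φ y.1) α β x)) :
    KempeStep G L φ (kempeSwap G φ α β ↑x) ∧
      ∀ u : ({v}ᶜ : Set V), kempeSwap G φ α β ↑x ↑u =
        kempeSwap (G.induce ({v}ᶜ : Set V)) (fun y => φ y.1) α β x u := by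
  have hxv : (↑x : V) ≠ v := neS x.2
  -- v has a Kempe neighbor u₀, necessarily colored β
  obtain ⟨p⟩ := hre
  obtain ⟨u₀, hadj₀, -⟩ := exists_snd p.reverse (fun h => hxv h.symm)
  have hre : (kempeGraph G φ α β).Reachable ↑x v := ⟨p⟩
  have hu₀β : φ u₀ = β := by
    rcases hadj₀.2.2 with h | h
    · exact absurd (hvα.trans h.symm) (hφ.2 hadj₀.1)
    · exact h
  have hadj₀' : G.Adj v u₀ := hadj₀.1
  -- the set of colors on the neighborhood of v
  set N : Finset ℕ := (G.neighborSet v).toFinset.image φ with hN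
  have hmemN : ∀ {w}, G.Adj v w → φ w ∈ N := fun {w} hw =>
    Finset.mem_image_of_mem φ (Set.mem_toFinset.mpr hw)
  have hNcard : N.card ≤ gdeg G v := (gdeg_eq G v) ▸ Finset.card_image_le
  have hβN : β ∈ N := hu₀β ▸ hmemN hadj₀'
  -- β ∈ L v
  have hβL : β ∈ L v := by
    by_contra hβL
    have hsub : L v ⊆ insert α (N.erase β) := by
      intro γ hγL
      rcases eq_or_ne γ α with h | h
      · exact h ▸ Finset.mem_insert_self _ _
      rcases eq_or_ne γ β with h | h'
      · exact absurd (h ▸ hγL) hβL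
      obtain ⟨w, hw, hwγ⟩ := hγ γ hγL h h'
      exact Finset.mem_insert_of_mem (Finset.mem_erase.mpr ⟨h', hwγ ▸ hmemN hw⟩)
    have h1 := Finset.card_le_card hsub
    have h2 := Finset.card_insert_le α (N.erase β)
    have h3 := Finset.card_erase_of_mem hβN
    have h4 : 1 ≤ N.card := Finset.card_pos.mpr ⟨β, hβN⟩
    omega
  -- u₀ is the unique neighbor of v colored β
  have hun : ∀ w, G.Adj v w → φ w = β → w = u₀ := by
    intro w hw hwβ
    by_contra hne
    have hNle : N ⊆ ((G.neighborSet v).toFinset.erase w).image φ := by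
      intro c hc
      obtain ⟨z, hz, rfl⟩ := Finset.mem_image.mp hc
      rcases eq_or_ne z w with h | h
      · subst h
        refine Finset.mem_image.mpr ⟨u₀, Finset.mem_erase.mpr
          ⟨fun h => hne h.symm, Set.mem_toFinset.mpr hadj₀'⟩, ?_⟩
        rw [hu₀β, ← hwβ]
      · exact Finset.mem_image.mpr ⟨z, Finset.mem_erase.mpr ⟨h, hz⟩, rfl⟩
    have h1 : N.card ≤ (G.neighborSet v).toFinset.card - 1 := by
      calc N.card ≤ (((G.neighborSet v).toFinset.erase w).image φ).card :=
            Finset.card_le_card hNle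
        _ ≤ ((G.neighborSet v).toFinset.erase w).card := Finset.card_image_le
        _ = (G.neighborSet v).toFinset.card - 1 :=
            Finset.card_erase_of_mem (Set.mem_toFinset.mpr hw)
    have hsub : L v ⊆ insert α N := by
      intro γ hγL
      rcases eq_or_ne γ α with h | h
      · exact h ▸ Finset.mem_insert_self _ _
      rcases eq_or_ne γ β with h' | h'
      · exact Finset.mem_insert_of_mem (h' ▸ hβN)
      obtain ⟨z, hz, hzγ⟩ := hγ γ hγL h h'
      exact Finset.mem_insert_of_mem (hzγ ▸ hmemN hz)
    have h2 := Finset.card_le_card hsub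
    have h3 := Finset.card_insert_le α N
    have h4 : 1 ≤ (G.neighborSet v).toFinset.card :=
      Finset.card_pos.mpr ⟨u₀, Set.mem_toFinset.mpr hadj₀'⟩
    have h5 := gdeg_eq G v
    omega
  -- degree one in the Kempe graph
  have hdegK : ∀ w, (kempeGraph G φ α β).Adj v w → w = u₀ := by
    intro w hw
    refine hun w hw.1 ?_
    rcases hw.2.2 with h | h
    · exact absurd (hvα.trans h.symm) (hφ.2 hw.1)
    · exact h
  have hiff : ∀ u : ({v}ᶜ : Set V), (kempeGraph G φ α β).Reachable ↑x ↑u ↔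
      (kempeGraph (G.induce ({v}ᶜ : Set V)) (fun y => φ y.1) α β).Reachable x u := by
    intro u
    rw [kempe_induce]
    exact reach_transfer x.2 u.2 (safe_of_deg_one hdegK hxv (neS u.2))
  have hrest : ∀ u : ({v}ᶜ : Set V), kempeSwap G φ α β ↑x ↑u =
      kempeSwap (G.induce ({v}ᶜ : Set V)) (fun y => φ y.1) α β x u :=
    fun u => swap_restrict_eq (hiff u)
  have hvval : kempeSwap G φ α β ↑x v = β := by
    unfold kempeSwap
    rw [if_pos ⟨hre, hvα⟩]
  -- neighbors of v end up with a color ≠ β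
  have hkey : ∀ w, G.Adj v w → kempeSwap G φ α β ↑x w ≠ β := by
    intro w hw
    rcases eq_or_ne w u₀ with h | h
    · subst h
      have hwre : (kempeGraph G φ α β).Reachable ↑x w := hre.trans ⟨hadj₀.toWalk⟩
      unfold kempeSwap
      rw [if_neg (fun hc => hab (hu₀β ▸ hc.2).symm), if_pos ⟨hwre, hu₀β⟩]
      exact hab
    · have hwα : φ w ≠ α := fun hc => hφ.2 hw (hvα.trans hc.symm)
      have hwβ : φ w ≠ β := fun hc => h (hun w hw hc)
      unfold kempeSwap
      rw [if_neg (fun hc => hwα hc.2), if_neg (fun hc => hwβ hc.2)]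
      exact hwβ
  have hcol : IsLColoring G L (kempeSwap G φ α β ↑x) := by
    constructor
    · intro u
      by_cases hu : u = v
      · subst hu; rw [hvval]; exact hβL
      · rw [show u = ((⟨u, memS hu⟩ : ({v}ᶜ : Set V)) : V) from rfl, hrest ⟨u, memS hu⟩]
        exact hρ'.1 ⟨u, memS hu⟩
    · intro a b hadj
      by_cases ha : a = v <;> by_cases hb : b = v
      · subst ha; subst hb; exact absurd hadj (G.loopless.irrefl _)
      · subst ha
        rw [hvval]
        exact fun h => hkey b hadj h.symm
      · subst hb
        rw [hvval]
        exact hkey a hadj.symm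
      · rw [show a = ((⟨a, memS ha⟩ : ({v}ᶜ : Set V)) : V) from rfl,
          show b = ((⟨b, memS hb⟩ : ({v}ᶜ : Set V)) : V) from rfl,
          hrest ⟨a, memS ha⟩, hrest ⟨b, memS hb⟩]
        exact hρ'.2 (show (G.induce ({v}ᶜ : Set V)).Adj ⟨a, memS ha⟩ ⟨b, memS hb⟩ from hadj)
  exact ⟨⟨hφ, hcol, α, β, ↑x, rfl⟩, hrest⟩

end CaseB2

section Lift

variable {V : Type*} [Fintype V]

private lemma lift_step (G : SimpleGraph V) (L : V → Finset ℕ) (v : V)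
    (hv : gdeg G v < (L v).card)
    {φ : V → ℕ} (hφ : IsLColoring G L φ) (α β : ℕ) (x : ({v}ᶜ : Set V))
    (hρ' : IsLColoring (G.induce ({v}ᶜ : Set V)) (fun y => L y.1)
      (kempeSwap (G.induce ({v}ᶜ : Set V)) (fun y => φ y.1) α β x)) :
    ∃ φ₂, IsLColoring G L φ₂ ∧ LEquiv G L φ φ₂ ∧
      ∀ u : ({v}ᶜ : Set V), φ₂ ↑u =
        kempeSwap (G.induce ({v}ᶜ : Set V)) (fun y => φ y.1) α β x u := by
  by_cases hab : α = β
  · -- the swap is trivial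
    subst hab
    refine ⟨φ, hφ, Relation.ReflTransGen.refl, fun u => ?_⟩
    simp only [kempeSwap]
    split_ifs with h1
    · exact h1.2
    · rfl
  by_cases hre : (kempeGraph G φ α β).Reachable ↑x v
  · -- v lies in the swapped component
    have hxv : (↑x : V) ≠ v := neS x.2
    -- φ v ∈ {α, β}
    have hφv : φ v = α ∨ φ v = β := by
      obtain ⟨p⟩ := hre
      obtain ⟨y, hy, -⟩ := exists_snd p.reverse (fun h => hxv h.symm)
      exact hy.2.1
    by_cases hfree : ∃ γ ∈ L v, γ ≠ α ∧ γ ≠ β ∧ ∀ w, G.Adj v w → φ w ≠ γ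
    · -- Case B1 : recolor v first, then do the swap
      obtain ⟨γ, hγL, hγα, hγβ, hγn⟩ := hfree
      have step1 := recolor_step G L hφ v hγL hγn
      set φ₁ := Function.update φ v γ with hφ₁
      have hφ₁col : IsLColoring G L φ₁ := step1.2.1
      have hρeq : (fun y : ({v}ᶜ : Set V) => φ₁ y.1) = (fun y : ({v}ᶜ : Set V) => φ y.1) :=
        funext fun u => Function.update_of_ne (neS u.2) _ _
      have hre₁ : ¬ (kempeGraph G φ₁ α β).Reachable ↑x v := by
        intro hr
        have hiso : ∀ w, ¬ (kempeGraph G φ₁ α β).Adj v w := by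
          intro w hw
          rcases hw.2.1 with h | h
          · exact hγα (by rw [hφ₁, Function.update_self] at h; exact h.symm ▸ rfl)
          · exact hγβ (by rw [hφ₁, Function.update_self] at h; exact h.symm ▸ rfl)
        exact hxv (reach_eq_of_no_adj hiso hr.symm)
      have hρ'₁ : IsLColoring (G.induce ({v}ᶜ : Set V)) (fun y => L y.1)
          (kempeSwap (G.induce ({v}ᶜ : Set V)) (fun y => φ₁ y.1) α β x) := by
        rw [hρeq]; exact hρ'
      obtain ⟨step2, hrest⟩ := lift_caseA G L v hφ₁col α β x hre₁ hρ'₁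
      refine ⟨kempeSwap G φ₁ α β ↑x, step2.2.1,
        Relation.ReflTransGen.head step1 (Relation.ReflTransGen.single step2),
        fun u => ?_⟩
      rw [hrest u, hρeq]
    · -- Case B2
      push_neg at hfree
      have hγ : ∀ γ ∈ L v, γ ≠ α → γ ≠ β → ∃ w, G.Adj v w ∧ φ w = γ := by
        intro γ h1 h2 h3
        obtain ⟨w, hw, hwγ⟩ := hfree γ h1 h2 h3
        exact ⟨w, hw, hwγ⟩
      rcases hφv with hvα | hvβ
      · obtain ⟨step, hrest⟩ := lift_caseB2 G L v hv hφ α β hab hvα x hre hγ hρ'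
        exact ⟨_, step.2.1, Relation.ReflTransGen.single step, hrest⟩
      · -- symmetric case : swap the roles of α and β
        have hre' : (kempeGraph G φ β α).Reachable ↑x v := by
          rwa [← kempeGraph_comm]
        have hγ' : ∀ γ ∈ L v, γ ≠ β → γ ≠ α → ∃ w, G.Adj v w ∧ φ w = γ :=
          fun γ h1 h2 h3 => hγ γ h1 h3 h2
        have hρ'' : IsLColoring (G.induce ({v}ᶜ : Set V)) (fun y => L y.1)
            (kempeSwap (G.induce ({v}ᶜ : Set V)) (fun y => φ y.1) β α x) := by
          rwa [← kempeSwap_comm]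
        obtain ⟨step, hrest⟩ :=
          lift_caseB2 G L v hv hφ β α (Ne.symm hab) hvβ x hre' hγ' hρ''
        refine ⟨_, step.2.1, Relation.ReflTransGen.single step, fun u => ?_⟩
        rw [hrest u, ← kempeSwap_comm]
  · -- Case A
    obtain ⟨step, hrest⟩ := lift_caseA G L v hφ α β x hre hρ'
    exact ⟨_, step.2.1, Relation.ReflTransGen.single step, hrest⟩

end Lift

private theorem stmt_4_aux {V : Type*} [Fintype V] (G : SimpleGraph V)
    (hconn : G.Connected) (L : V → Finset ℕ) (v : V)
    (hv : gdeg G v < (L v).card)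
    (hG' : LSwappable (G.induce ({v}ᶜ : Set V)) (fun x => L x.1)) :
    LSwappable G L := by
  obtain ⟨⟨φ₀, hφ₀⟩, hequiv'⟩ := hG'
  constructor
  · -- existence : extend an L'-coloring of G - v to G
    set ψ : V → ℕ := fun u => if h : ¬ (u = v) then φ₀ ⟨u, h⟩ else 0 with hψ
    have hψeq : ∀ (u : V) (h : u ≠ v), ψ u = φ₀ ⟨u, h⟩ := fun u h => dif_pos h
    set N : Finset ℕ := (G.neighborSet v).toFinset.image ψ with hN
    have hNcard : N.card ≤ gdeg G v := (gdeg_eq G v) ▸ Finset.card_image_le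
    have hex : ∃ c ∈ L v, c ∉ N := by
      by_contra hc
      push_neg at hc
      exact absurd (Finset.card_le_card hc) (by omega)
    obtain ⟨c, hcL, hcN⟩ := hex
    refine ⟨Function.update ψ v c, ?_, ?_⟩
    · intro u
      by_cases hu : u = v
      · subst hu; simpa using hcL
      · rw [Function.update_of_ne hu, hψeq u hu]
        exact hφ₀.1 ⟨u, hu⟩
    · intro a b hadj
      have hne : ∀ w, G.Adj v w → ψ w ≠ c :=
        fun w hw h => hcN (h ▸ Finset.mem_image_of_mem ψ (Set.mem_toFinset.mpr hw))
      by_cases ha : a = v <;> by_cases hb : b = v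
      · subst ha; subst hb; exact absurd hadj (G.loopless.irrefl _)
      · subst ha
        rw [Function.update_self, Function.update_of_ne hb]
        exact fun h => hne b hadj h.symm
      · subst hb
        rw [Function.update_of_ne ha, Function.update_self]
        exact hne a hadj.symm
      · rw [Function.update_of_ne ha, Function.update_of_ne hb,
          hψeq a ha, hψeq b hb]
        exact hφ₀.2 (show (G.induce ({v}ᶜ : Set V)).Adj ⟨a, ha⟩ ⟨b, hb⟩ from hadj)
  · -- all L-colorings are equivalent
    intro φ ψ hφ hψ
    have hchain := hequiv' _ _ (restrict_coloring hφ v) (restrict_coloring hψ v)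
    have main : ∀ (ρ σ : ({v}ᶜ : Set V) → ℕ),
        Relation.ReflTransGen (KempeStep (G.induce ({v}ᶜ : Set V)) (fun y => L y.1)) ρ σ →
        ∀ χ, IsLColoring G L χ → (∀ u : ({v}ᶜ : Set V), χ ↑u = ρ u) →
        ∃ χ₂, IsLColoring G L χ₂ ∧ LEquiv G L χ χ₂ ∧ ∀ u : ({v}ᶜ : Set V), χ₂ ↑u = σ u := by
      intro ρ σ h
      induction h using Relation.ReflTransGen.head_induction_on with
      | refl => exact fun χ hχ hr => ⟨χ, hχ, Relation.ReflTransGen.refl, hr⟩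
      | head hstep htail ih =>
        rename_i ρ' c
        intro χ hχ hr
        obtain ⟨hρcol, hccol, α, β, x, hb⟩ := hstep
        have hρeq : ρ' = fun u : ({v}ᶜ : Set V) => χ ↑u := funext fun u => (hr u).symm
        subst hρeq
        rw [hb] at hccol
        obtain ⟨χ₁, hχ₁, hequiv₁, hrest₁⟩ := lift_step G L v hv hχ α β x hccol
        obtain ⟨χ₂, hχ₂, hequiv₂, hrest₂⟩ := ih χ₁ hχ₁
          (fun u => by rw [hrest₁ u, hb])
        exact ⟨χ₂, hχ₂, hequiv₁.trans hequiv₂, hrest₂⟩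
    obtain ⟨χ₂, hχ₂, hequiv, hrest⟩ :=
      main _ _ hchain φ hφ (fun u => rfl)
    by_cases hfin : χ₂ v = ψ v
    · have : χ₂ = ψ := by
        funext u
        by_cases hu : u = v
        · subst hu; exact hfin
        · exact hrest ⟨u, hu⟩
      exact this ▸ hequiv
    · have hne : ∀ w, G.Adj v w → χ₂ w ≠ ψ v := by
        intro w hw
        have hwv : w ≠ v := fun h => G.loopless.irrefl v (h ▸ hw)
        rw [hrest ⟨w, hwv⟩]
        exact fun h => hψ.2 hw h.symm
      have step := recolor_step G L hχ₂ v (hψ.1 v) hne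
      have hupd : Function.update χ₂ v (ψ v) = ψ := by
        funext u
        by_cases hu : u = v
        · subst hu; exact Function.update_self _ _ _
        · rw [Function.update_of_ne hu]; exact hrest ⟨u, hu⟩
      exact hequiv.trans (Relation.ReflTransGen.single (hupd ▸ step))


/-- **Lemma.** If `G` is connected, `|L(v)| > deg_G(v)` for a vertex `v`, and
`G − v` is swappable for the restriction of `L`, then `G` is `L`-swappable. -/
theorem stmt_4 {V : Type*} [Fintype V] (G : SimpleGraph V)
    (hconn : G.Connected) (L : V → Finset ℕ) (v : V)
    (hv : gdeg G v < (L v).card)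
    (hG' : LSwappable (G.induce ({v}ᶜ : Set V)) (fun x => L x.1)) :
    LSwappable G L :=
  stmt_4_aux G hconn L v hv hG'
end

section
/- Let G be a connected finite simple graph and let L be a list-assignment for G such that |L(v)| ≥ deg_G(v) for every vertex v and |L(w)| > deg_G(w) for some vertex w. Then G is L-swappable. -/
open SimpleGraph
open scoped Classical

namespace KempeAux

variable {V : Type*}

lemma kempeGraph_le (G : SimpleGraph V) (φ : V → ℕ) (α β : ℕ) : kempeGraph G φ α β ≤ G :=
  fun _ _ h => h.1

lemma kempeGraph_comm (G : SimpleGraph V) (φ : V → ℕ) (α β : ℕ) :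
    kempeGraph G φ α β = kempeGraph G φ β α := by
  ext u w
  show G.Adj u w ∧ _ ∧ _ ↔ G.Adj u w ∧ _ ∧ _
  tauto

lemma kempeSwap_comm (G : SimpleGraph V) (φ : V → ℕ) (α β : ℕ) (x : V) :
    kempeSwap G φ α β x = kempeSwap G φ β α x := by
  by_cases hab : α = β
  · subst hab; rfl
  funext v
  unfold kempeSwap
  rw [kempeGraph_comm]
  by_cases hr : (kempeGraph G φ β α).Reachable x v
  · by_cases ha : φ v = α <;> by_cases hb : φ v = β <;>
      simp [hr, ha, hb, hab] <;> omega
  · simp [hr]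

lemma kempeSwap_self (G : SimpleGraph V) (φ : V → ℕ) (α : ℕ) (x : V) :
    kempeSwap G φ α α x = φ := by
  funext v
  unfold kempeSwap
  by_cases hr : (kempeGraph G φ α α).Reachable x v <;> by_cases ha : φ v = α <;>
    simp [hr, ha]

/-- Trichotomy for the value of a Kempe swap at a vertex. -/
lemma kempeSwap_cases (G : SimpleGraph V) (φ : V → ℕ) (α β : ℕ) (x v : V) (hab : α ≠ β) :
    ((¬ ((kempeGraph G φ α β).Reachable x v ∧ (φ v = α ∨ φ v = β))) ∧
        kempeSwap G φ α β x v = φ v) ∨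
      ((kempeGraph G φ α β).Reachable x v ∧ φ v = α ∧ kempeSwap G φ α β x v = β) ∨
      ((kempeGraph G φ α β).Reachable x v ∧ φ v = β ∧ kempeSwap G φ α β x v = α) := by
  unfold kempeSwap
  by_cases hr : (kempeGraph G φ α β).Reachable x v
  · by_cases ha : φ v = α
    · exact Or.inr (Or.inl ⟨hr, ha, by simp [hr, ha]⟩)
    · by_cases hb : φ v = β
      · exact Or.inr (Or.inr ⟨hr, hb, by simp [hr, ha, hb]⟩)
      · exact Or.inl ⟨by tauto, by simp [ha, hb]⟩
  · exact Or.inl ⟨by tauto, by simp [hr]⟩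

lemma kempeSwap_eq_of_not_reachable {G : SimpleGraph V} {φ : V → ℕ} {α β : ℕ} {x v : V}
    (h : ¬ (kempeGraph G φ α β).Reachable x v) : kempeSwap G φ α β x v = φ v := by
  unfold kempeSwap; simp [h]

/-- If `w` has no edges in `K`, it is reachable only from itself. -/
lemma eq_of_reachable_isolated {K : SimpleGraph V} {w u : V}
    (h : ∀ z, ¬ K.Adj w z) (hr : K.Reachable w u) : u = w := by
  obtain ⟨p⟩ := hr
  cases p with
  | nil => rfl
  | cons adj _ => exact absurd adj (h _)

lemma adj_exists_of_reachable {K : SimpleGraph V} {x w : V}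
    (hr : K.Reachable x w) (hne : x ≠ w) : ∃ z, K.Adj w z := by
  obtain ⟨p⟩ := hr.symm
  cases p with
  | nil => exact absurd rfl hne.symm
  | cons adj _ => exact ⟨_, adj⟩

/-- Kempe swaps preserve properness. -/
lemma kempeSwap_proper {G : SimpleGraph V} {φ : V → ℕ} {α β : ℕ} {x : V}
    (hφ : ∀ ⦃u w : V⦄, G.Adj u w → φ u ≠ φ w) :
    ∀ ⦃u w : V⦄, G.Adj u w → kempeSwap G φ α β x u ≠ kempeSwap G φ α β x w := by
  by_cases hab : α = β
  · subst hab; rw [kempeSwap_self]; exact hφ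
  intro u w hadj
  have hne := hφ hadj
  have hKadj : (φ u = α ∨ φ u = β) → (φ w = α ∨ φ w = β) → (kempeGraph G φ α β).Adj u w :=
    fun h1 h2 => ⟨hadj, h1, h2⟩
  rcases kempeSwap_cases G φ α β x u hab with ⟨hu, hu2⟩ | ⟨hru, hua, hu2⟩ | ⟨hru, hub, hu2⟩ <;>
    rcases kempeSwap_cases G φ α β x w hab with ⟨hw, hw2⟩ | ⟨hrw, hwa, hw2⟩ | ⟨hrw, hwb, hw2⟩ <;>
    rw [hu2, hw2]
  · exact hne
  · -- u unchanged, w : α → β. If φ u = β then u would be reachable via w.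
    intro hc
    exact hu ⟨hrw.trans (hKadj (by rw [hc]; tauto) (Or.inl hwa)).symm.reachable, by rw [hc]; tauto⟩
  · intro hc
    exact hu ⟨hrw.trans (hKadj (by rw [hc]; tauto) (Or.inr hwb)).symm.reachable, by rw [hc]; tauto⟩
  · intro hc
    exact hw ⟨hru.trans (hKadj (Or.inl hua) (by rw [← hc]; tauto)).reachable, by rw [← hc]; tauto⟩
  · exact absurd (hua ▸ hwa ▸ hne) (fun h => h rfl)
  · exact Ne.symm hab
  · intro hc
    exact hw ⟨hru.trans (hKadj (Or.inr hub) (by rw [← hc]; tauto)).reachable, by rw [← hc]; tauto⟩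
  · exact hab
  · exact absurd (hub ▸ hwb ▸ hne) (fun h => h rfl)


/-- The graph `G` with all edges at `w` removed. -/
def deleteAt (G : SimpleGraph V) (w : V) : SimpleGraph V where
  Adj u z := G.Adj u z ∧ u ≠ w ∧ z ≠ w
  symm := ⟨fun u z h => ⟨h.1.symm, h.2.2, h.2.1⟩⟩
  loopless := ⟨fun u h => G.loopless.irrefl u h.1⟩

lemma deleteAt_le (G : SimpleGraph V) (w : V) : deleteAt G w ≤ G := fun _ _ h => h.1

lemma deleteAt_isolated (G : SimpleGraph V) (w : V) : ∀ z, ¬ (deleteAt G w).Adj w z :=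
  fun _ h => h.2.1 rfl

lemma deleteAt_adj {G : SimpleGraph V} {w u z : V} (h : G.Adj u z) (hu : u ≠ w) (hz : z ≠ w) :
    (deleteAt G w).Adj u z := ⟨h, hu, hz⟩

section Transfer

variable {G : SimpleGraph V} {w : V} {θ σ : V → ℕ} {α β : ℕ}

/-- Monotonicity: the Kempe graph of the deleted graph is contained in that of `G`. -/
lemma kempe_deleteAt_le (hmatch : ∀ u, u ≠ w → θ u = σ u) :
    kempeGraph (deleteAt G w) σ α β ≤ kempeGraph G θ α β := by
  rintro u z ⟨⟨hGadj, hu, hz⟩, hcu, hcz⟩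
  exact ⟨hGadj, by rw [hmatch u hu]; exact hcu, by rw [hmatch z hz]; exact hcz⟩

/-- If `w` is not reachable, reachability transfers to the deleted graph. -/
lemma reach_transfer_of_not_reach_w (hmatch : ∀ u, u ≠ w → θ u = σ u) {x : V}
    (hnr : ¬ (kempeGraph G θ α β).Reachable x w) :
    ∀ u, (kempeGraph G θ α β).Reachable x u →
      (kempeGraph (deleteAt G w) σ α β).Reachable x u := by
  intro u hr
  rw [SimpleGraph.reachable_iff_reflTransGen] at hr
  rw [SimpleGraph.reachable_iff_reflTransGen]
  rw [SimpleGraph.reachable_iff_reflTransGen] at hnr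
  induction hr with
  | refl => exact Relation.ReflTransGen.refl
  | @tail b c hab hbc ih =>
    have hbw : b ≠ w := fun h => hnr (h ▸ hab)
    have hcw : c ≠ w := fun h => hnr (h ▸ (hab.tail hbc))
    obtain ⟨hGadj, hcb, hcc⟩ := hbc
    exact ih.tail ⟨⟨hGadj, hbw, hcw⟩, by rw [← hmatch b hbw]; exact hcb,
      by rw [← hmatch c hcw]; exact hcc⟩

/-- If `w` has a unique Kempe-neighbor `z₀`, reachability transfers off `w`. -/
lemma reach_transfer_uniq (hmatch : ∀ u, u ≠ w → θ u = σ u) {x z₀ : V} (hx : x ≠ w)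
    (hz₀ : G.Adj w z₀) (hz₀β : θ z₀ = β) (hwcol : θ w = α)
    (hprop : ∀ ⦃u z : V⦄, G.Adj u z → θ u ≠ θ z)
    (huniq : ∀ z, G.Adj w z → θ z = β → z = z₀) :
    ∀ u, (kempeGraph G θ α β).Reachable x u →
      (u = w ∧ (kempeGraph (deleteAt G w) σ α β).Reachable x z₀) ∨
      (u ≠ w ∧ (kempeGraph (deleteAt G w) σ α β).Reachable x u) := by
  intro u hr
  rw [SimpleGraph.reachable_iff_reflTransGen] at hr
  simp only [SimpleGraph.reachable_iff_reflTransGen]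
  induction hr with
  | refl => exact Or.inr ⟨hx, Relation.ReflTransGen.refl⟩
  | @tail b c hab hbc ih =>
    obtain ⟨hGadj, hcb, hcc⟩ := hbc
    rcases ih with ⟨hbw, hreach⟩ | ⟨hbw, hreach⟩
    · -- b = w, so c is a Kempe-neighbor of w, hence c = z₀
      subst hbw
      have hcβ : θ c = β := by
        rcases hcc with h | h
        · exact absurd (hwcol ▸ h ▸ rfl : θ b = θ c) (hprop hGadj)
        · exact h
      have hcz₀ : c = z₀ := huniq c hGadj hcβ
      subst hcz₀
      exact Or.inr ⟨hz₀.ne', hreach⟩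
    · by_cases hcw : c = w
      · -- c = w : then b is a β-colored neighbor of w, so b = z₀
        subst hcw
        have hbβ : θ b = β := by
          rcases hcb with h | h
          · exact absurd (h ▸ hwcol ▸ rfl : θ b = θ c) (hprop hGadj)
          · exact h
        have : b = z₀ := huniq b hGadj.symm hbβ
        exact Or.inl ⟨rfl, this ▸ hreach⟩
      · exact Or.inr ⟨hcw, hreach.tail ⟨⟨hGadj, hbw, hcw⟩,
          by rw [← hmatch b hbw]; exact hcb, by rw [← hmatch c hcw]; exact hcc⟩⟩

/-- Matching of swap values off `w`, given matching reachability. -/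
lemma swap_match (hmatch : ∀ u, u ≠ w → θ u = σ u) {x u : V} (hu : u ≠ w)
    (hiff : (kempeGraph G θ α β).Reachable x u ↔
      (kempeGraph (deleteAt G w) σ α β).Reachable x u) :
    kempeSwap G θ α β x u = kempeSwap (deleteAt G w) σ α β x u := by
  unfold kempeSwap
  rw [← hiff, ← hmatch u hu]

end Transfer

section Core

variable {G : SimpleGraph V} {L L' : V → Finset ℕ} {w : V}

noncomputable def nbrF [Fintype V] (G : SimpleGraph V) (w : V) : Finset V :=
  Finset.univ.filter (G.Adj w)

lemma mem_nbrF [Fintype V] {G : SimpleGraph V} {w z : V} : z ∈ nbrF G w ↔ G.Adj w z := by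
  simp [nbrF]

lemma gdeg_eq_nbrF [Fintype V] (G : SimpleGraph V) (w : V) : gdeg G w = (nbrF G w).card := by
  have : G.neighborSet w = ↑(nbrF G w) := by
    ext z; simp [SimpleGraph.neighborSet, nbrF]
  rw [gdeg, this, Set.ncard_coe_finset]

/-- Lift a Kempe step of `deleteAt G w` when `w` is not in the swapped component. -/
lemma lift_notreach (hL' : ∀ u, u ≠ w → L' u = L u) {σ : V → ℕ} {α β : ℕ} {x : V}
    (hσ' : IsLColoring (deleteAt G w) L' (kempeSwap (deleteAt G w) σ α β x))
    {θ : V → ℕ} (hθ : IsLColoring G L θ) (hmatch : ∀ u, u ≠ w → θ u = σ u)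
    (hnr : ¬ (kempeGraph G θ α β).Reachable x w) :
    ∃ θ', IsLColoring G L θ' ∧ (∀ u, u ≠ w → θ' u = kempeSwap (deleteAt G w) σ α β x u) ∧
      KempeStep G L θ θ' := by
  have hmatch' : ∀ u, u ≠ w → kempeSwap G θ α β x u = kempeSwap (deleteAt G w) σ α β x u := by
    intro u hu
    exact swap_match hmatch hu
      ⟨fun h => reach_transfer_of_not_reach_w hmatch hnr u h,
       fun h => h.mono (kempe_deleteAt_le hmatch)⟩
  have hcol : IsLColoring G L (kempeSwap G θ α β x) := by
    constructor
    · intro u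
      by_cases hu : u = w
      · subst hu
        rw [kempeSwap_eq_of_not_reachable hnr]
        exact hθ.1 _
      · rw [hmatch' u hu, ← hL' u hu]
        exact hσ'.1 u
    · exact kempeSwap_proper hθ.2
  exact ⟨kempeSwap G θ α β x, hcol, hmatch', hθ, hcol, α, β, x, rfl⟩

/-- Lift a Kempe step when `w` is in the swapped component and `θ w = α`. -/
lemma lift_reach [Fintype V] (hLw : gdeg G w < (L w).card)
    (hL' : ∀ u, u ≠ w → L' u = L u) {σ : V → ℕ} {α β : ℕ} {x : V}
    (hσ' : IsLColoring (deleteAt G w) L' (kempeSwap (deleteAt G w) σ α β x))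
    {θ : V → ℕ} (hθ : IsLColoring G L θ) (hmatch : ∀ u, u ≠ w → θ u = σ u)
    (hab : α ≠ β) (hx : x ≠ w) (hwα : θ w = α)
    (hr : (kempeGraph G θ α β).Reachable x w) :
    ∃ θ', IsLColoring G L θ' ∧ (∀ u, u ≠ w → θ' u = kempeSwap (deleteAt G w) σ α β x u) ∧
      LEquiv G L θ θ' := by
  by_cases h2a : ∃ γ ∈ L w, γ ≠ α ∧ γ ≠ β ∧ ∀ z, G.Adj w z → θ z ≠ γ
  · -- recolor w to γ first, then apply `lift_notreach`
    obtain ⟨γ, hγL, hγα, hγβ, hγnbr⟩ := h2a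
    set θ₂ : V → ℕ := fun u => if u = w then γ else θ u with hθ₂def
    have hiso : ∀ z, ¬ (kempeGraph G θ α γ).Adj w z := by
      rintro z ⟨hGadj, _, hc⟩
      rcases hc with h | h
      · exact hθ.2 hGadj (by rw [hwα, h])
      · exact hγnbr z hGadj h
    have hswap_eq : kempeSwap G θ α γ w = θ₂ := by
      funext u
      by_cases hu : u = w
      · subst hu
        have : (kempeGraph G θ α γ).Reachable u u := SimpleGraph.Reachable.refl u
        simp [kempeSwap, this, hwα, hθ₂def]
      · rw [kempeSwap_eq_of_not_reachable
          (fun h => hu (eq_of_reachable_isolated hiso h))]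
        simp [hθ₂def, hu]
    have hθ₂ : IsLColoring G L θ₂ := by
      constructor
      · intro u
        by_cases hu : u = w <;> simp only [hθ₂def, hu, if_true, if_false, if_pos, if_neg,
          not_false_iff]
        · subst hu; simpa using hγL
        · simpa [hu] using hθ.1 u
      · rw [← hswap_eq]
        exact kempeSwap_proper hθ.2
    have step1 : KempeStep G L θ θ₂ := ⟨hθ, hθ₂, α, γ, w, hswap_eq.symm⟩
    have hmatch₂ : ∀ u, u ≠ w → θ₂ u = σ u := by
      intro u hu; simp only [hθ₂def, hu, if_neg, not_false_iff]
      simpa [hu] using hmatch u hu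
    have hnr₂ : ¬ (kempeGraph G θ₂ α β).Reachable x w := by
      have hiso₂ : ∀ z, ¬ (kempeGraph G θ₂ α β).Adj w z := by
        rintro z ⟨_, hcw, _⟩
        have hγ2 : θ₂ w = γ := by simp [hθ₂def]
        rcases hcw with h | h
        · exact hγα (hγ2 ▸ h)
        · exact hγβ (hγ2 ▸ h)
      exact fun h => hx (eq_of_reachable_isolated hiso₂ h.symm)
    obtain ⟨θ', hcol, hm, hstep⟩ := lift_notreach hL' hσ' hθ₂ hmatch₂ hnr₂
    exact ⟨θ', hcol, hm, Relation.ReflTransGen.head step1 (Relation.ReflTransGen.single hstep)⟩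
  · -- the chain through `w` : `w` has a unique Kempe neighbor, colored `β`, and `β ∈ L w`
    push_neg at h2a
    obtain ⟨z₀, hKz₀⟩ := adj_exists_of_reachable hr hx
    obtain ⟨hGz₀, -, hcz₀⟩ := hKz₀
    have hz₀β : θ z₀ = β := by
      rcases hcz₀ with h | h
      · exact absurd (by rw [hwα, h]) (hθ.2 hGz₀)
      · exact h
    have himg : L w ⊆ insert α ((nbrF G w).image θ) := by
      intro γ hγ
      by_cases hγα : γ = α
      · subst hγα; exact Finset.mem_insert_self _ _
      by_cases hγβ : γ = β
      · subst hγβ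
        exact Finset.mem_insert_of_mem
          (Finset.mem_image.mpr ⟨z₀, mem_nbrF.mpr hGz₀, hz₀β⟩)
      · obtain ⟨z, hz, hzθ⟩ := h2a γ hγ hγα hγβ
        exact Finset.mem_insert_of_mem (Finset.mem_image.mpr ⟨z, mem_nbrF.mpr hz, hzθ⟩)
    have hcard1 : (L w).card ≤ ((nbrF G w).image θ).card + 1 :=
      le_trans (Finset.card_le_card himg) (Finset.card_insert_le _ _)
    have hcard2 : ((nbrF G w).image θ).card ≤ (nbrF G w).card := Finset.card_image_le
    have hdeg := gdeg_eq_nbrF G w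
    have hicard : ((nbrF G w).image θ).card = (nbrF G w).card := by omega
    have hinj : Set.InjOn θ ↑(nbrF G w) := Finset.injOn_of_card_image_eq hicard
    have huniq : ∀ z, G.Adj w z → θ z = β → z = z₀ := fun z hz hzβ =>
      hinj (Finset.mem_coe.mpr (mem_nbrF.mpr hz)) (Finset.mem_coe.mpr (mem_nbrF.mpr hGz₀))
        (hzβ.trans hz₀β.symm)
    have hβL : β ∈ L w := by
      have hLeq : L w = insert α ((nbrF G w).image θ) :=
        Finset.eq_of_subset_of_card_le himg
          (le_trans (Finset.card_insert_le _ _) (by omega))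
      rw [hLeq]
      exact Finset.mem_insert_of_mem (Finset.mem_image.mpr ⟨z₀, mem_nbrF.mpr hGz₀, hz₀β⟩)
    have huniq' := reach_transfer_uniq (σ := σ) hmatch hx hGz₀ hz₀β hwα hθ.2 huniq
    have hmatch' : ∀ u, u ≠ w → kempeSwap G θ α β x u = kempeSwap (deleteAt G w) σ α β x u := by
      intro u hu
      refine swap_match hmatch hu ⟨fun h => ?_, fun h => h.mono (kempe_deleteAt_le hmatch)⟩
      rcases huniq' u h with ⟨rfl, -⟩ | ⟨-, h2⟩
      · exact absurd rfl hu
      · exact h2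
    have hswapw : kempeSwap G θ α β x w = β := by
      simp [kempeSwap, hr, hwα]
    have hcol : IsLColoring G L (kempeSwap G θ α β x) := by
      constructor
      · intro u
        by_cases hu : u = w
        · subst hu; rw [hswapw]; exact hβL
        · rw [hmatch' u hu, ← hL' u hu]; exact hσ'.1 u
      · exact kempeSwap_proper hθ.2
    exact ⟨_, hcol, hmatch', Relation.ReflTransGen.single ⟨hθ, hcol, α, β, x, rfl⟩⟩

/-- The core single-step lifting lemma. -/
lemma core_lift [Fintype V] (hLw : gdeg G w < (L w).card)
    (hL' : ∀ u, u ≠ w → L' u = L u)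
    {σ σ' : V → ℕ} (hstep : KempeStep (deleteAt G w) L' σ σ')
    {θ : V → ℕ} (hθ : IsLColoring G L θ) (hmatch : ∀ u, u ≠ w → θ u = σ u) :
    ∃ θ', IsLColoring G L θ' ∧ (∀ u, u ≠ w → θ' u = σ' u) ∧ LEquiv G L θ θ' := by
  obtain ⟨hσ, hσ', α, β, x, rfl⟩ := hstep
  by_cases hab : α = β
  · subst hab
    refine ⟨θ, hθ, ?_, Relation.ReflTransGen.refl⟩
    simp only [kempeSwap_self]
    exact hmatch
  by_cases hxw : x = w
  · subst hxw
    have hiso : ∀ z, ¬ (kempeGraph (deleteAt G x) σ α β).Adj x z :=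
      fun z h => deleteAt_isolated G x z h.1
    refine ⟨θ, hθ, ?_, Relation.ReflTransGen.refl⟩
    intro u hu
    rw [kempeSwap_eq_of_not_reachable (fun h => hu (eq_of_reachable_isolated hiso h))]
    exact hmatch u hu
  by_cases hr : (kempeGraph G θ α β).Reachable x w
  · obtain ⟨z, hKz⟩ := adj_exists_of_reachable hr hxw
    rcases hKz.2.1 with hwα | hwβ
    · exact lift_reach hLw hL' hσ' hθ hmatch hab hxw hwα hr
    · rw [kempeSwap_comm (deleteAt G w) σ α β x]
      have hr' : (kempeGraph G θ β α).Reachable x w := by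
        rw [kempeGraph_comm]; exact hr
      have hσ'' : IsLColoring (deleteAt G w) L' (kempeSwap (deleteAt G w) σ β α x) := by
        rw [← kempeSwap_comm]; exact hσ'
      exact lift_reach hLw hL' hσ'' hθ hmatch (Ne.symm hab) hxw hwβ hr'
  · obtain ⟨θ', h1, h2, h3⟩ := lift_notreach hL' hσ' hθ hmatch hr
    exact ⟨θ', h1, h2, Relation.ReflTransGen.single h3⟩

/-- Lift a whole chain of Kempe steps of `deleteAt G w`. -/
lemma chain_lift [Fintype V] (hLw : gdeg G w < (L w).card)
    (hL' : ∀ u, u ≠ w → L' u = L u) {σ σ' : V → ℕ}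
    (hEq : LEquiv (deleteAt G w) L' σ σ') :
    ∀ θ, IsLColoring G L θ → (∀ u, u ≠ w → θ u = σ u) →
      ∃ θ', IsLColoring G L θ' ∧ (∀ u, u ≠ w → θ' u = σ' u) ∧ LEquiv G L θ θ' := by
  induction hEq with
  | refl => exact fun θ hθ hm => ⟨θ, hθ, hm, Relation.ReflTransGen.refl⟩
  | tail hab hbc ih =>
    intro θ hθ hm
    obtain ⟨θ₁, h1, h2, h3⟩ := ih θ hθ hm
    obtain ⟨θ', g1, g2, g3⟩ := core_lift hLw hL' hbc h1 h2
    exact ⟨θ', g1, g2, h3.trans g3⟩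

/-- Two `L`-colorings differing only at `w` are equivalent. -/
lemma final_fix {θ ψ : V → ℕ} (hθ : IsLColoring G L θ) (hψ : IsLColoring G L ψ)
    (hm : ∀ u, u ≠ w → θ u = ψ u) : LEquiv G L θ ψ := by
  by_cases hcb : θ w = ψ w
  · have : θ = ψ := funext fun u => by
      by_cases hu : u = w
      · subst hu; exact hcb
      · exact hm u hu
    exact this ▸ Relation.ReflTransGen.refl
  · have hiso : ∀ z, ¬ (kempeGraph G θ (θ w) (ψ w)).Adj w z := by
      rintro z ⟨hGadj, -, hc⟩
      rcases hc with h | h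
      · exact hθ.2 hGadj h.symm
      · exact hψ.2 hGadj ((hm z hGadj.ne').symm.trans h).symm
    have hswap : kempeSwap G θ (θ w) (ψ w) w = ψ := by
      funext u
      by_cases hu : u = w
      · subst hu
        have : (kempeGraph G θ (θ u) (ψ u)).Reachable u u := SimpleGraph.Reachable.refl u
        simp [kempeSwap, this]
      · rw [kempeSwap_eq_of_not_reachable (fun h => hu (eq_of_reachable_isolated hiso h))]
        exact hm u hu
    exact Relation.ReflTransGen.single ⟨hθ, hψ, θ w, ψ w, w, hswap.symm⟩

/-- Swappability transfers from `deleteAt G w` back to `G` when `w` has slack. -/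
lemma lift_all [Fintype V] {G : SimpleGraph V} {L : V → Finset ℕ} {w : V} (c : ℕ)
    (hfresh : ∀ u, c ∉ L u) (hLw : gdeg G w < (L w).card)
    (hsw : LSwappable (deleteAt G w) (Function.update L w {c})) :
    LSwappable G L := by
  set L' := Function.update L w {c} with hL'def
  have hL' : ∀ u, u ≠ w → L' u = L u := fun u hu => Function.update_of_ne hu _ _
  constructor
  · -- existence
    obtain ⟨σ, hσ⟩ := hsw.1
    have hsub : ¬ (L w ⊆ (nbrF G w).image σ) := by
      intro hs
      have h1 := Finset.card_le_card hs
      have h2 : ((nbrF G w).image σ).card ≤ (nbrF G w).card := Finset.card_image_le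
      have h3 := gdeg_eq_nbrF G w
      omega
    obtain ⟨γ, hγL, hγn⟩ := Finset.not_subset.mp hsub
    refine ⟨fun u => if u = w then γ else σ u, ?_, ?_⟩
    · intro u
      by_cases hu : u = w
      · simp [hu, hγL]
      · simp only [hu, if_neg, not_false_iff, if_false]
        rw [← hL' u hu]
        exact hσ.1 u
    · intro u z hadj h
      by_cases hu : u = w <;> by_cases hz : z = w
      · rw [hu, hz] at hadj
        exact G.loopless.irrefl w hadj
      · simp only [hu, hz, if_true, if_false, if_pos rfl, if_neg, not_false_iff] at h
        exact hγn (h ▸ Finset.mem_image.mpr ⟨z, mem_nbrF.mpr (hu ▸ hadj), rfl⟩)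
      · simp only [hu, hz, if_true, if_false, if_pos rfl, if_neg, not_false_iff] at h
        exact hγn (h ▸ Finset.mem_image.mpr ⟨u, mem_nbrF.mpr (hz ▸ hadj.symm), rfl⟩ : γ ∈ _)
      · simp only [hu, hz, if_neg, not_false_iff, if_false] at h
        exact hσ.2 (deleteAt_adj hadj hu hz) h
  · -- equivalence
    intro φ ψ hφ hψ
    set σ0 : V → ℕ := fun u => if u = w then c else φ u with hσ0def
    set σ1 : V → ℕ := fun u => if u = w then c else ψ u with hσ1def
    have mkcol : ∀ (ρ : V → ℕ), IsLColoring G L ρ →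
        IsLColoring (deleteAt G w) L' (fun u => if u = w then c else ρ u) := by
      intro ρ hρ
      constructor
      · intro u
        by_cases hu : u = w
        · simp [hu, hL'def]
        · simp only [hu, if_neg, not_false_iff, if_false]
          rw [hL' u hu]
          exact hρ.1 u
      · rintro u z ⟨hadj, hu, hz⟩ h
        simp only [hu, hz, if_neg, not_false_iff, if_false] at h
        exact hρ.2 hadj h
    have hEq := hsw.2 σ0 σ1 (mkcol φ hφ) (mkcol ψ hψ)
    obtain ⟨θ', h1, h2, h3⟩ := chain_lift hLw hL' hEq φ hφ
      (fun u hu => by simp [hσ0def, hu])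
    exact h3.trans (final_fix h1 hψ
      (fun u hu => (h2 u hu).trans (by simp [hσ1def, hu])))

end Core

section Main

variable [Fintype V] {G : SimpleGraph V} {L : V → Finset ℕ}

lemma gdeg_deleteAt_le (G : SimpleGraph V) (w u : V) :
    gdeg (deleteAt G w) u ≤ gdeg G u := by
  apply Set.ncard_le_ncard _ (Set.toFinite _)
  intro z hz
  exact hz.1

lemma gdeg_deleteAt_self (G : SimpleGraph V) (w : V) :
    gdeg (deleteAt G w) w = 0 := by
  have : (deleteAt G w).neighborSet w = ∅ := by
    ext z
    simp only [SimpleGraph.mem_neighborSet, Set.mem_empty_iff_false, iff_false]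
    exact deleteAt_isolated G w z
  rw [gdeg, this, Set.ncard_empty]

lemma gdeg_deleteAt_lt {w u : V} (hadj : G.Adj u w) :
    gdeg (deleteAt G w) u < gdeg G u := by
  apply Set.ncard_lt_ncard _ (Set.toFinite _)
  constructor
  · intro z hz; exact hz.1
  · intro hsub
    have : w ∈ (deleteAt G w).neighborSet u := hsub hadj
    exact this.2.2 rfl

/-- If `v` can reach `w`, it can reach a neighbor of `w` avoiding `w`. -/
lemma reach_nbr_of_reach {w v : V} (hv : v ≠ w) (hr : G.Reachable v w) :
    ∃ u, G.Adj w u ∧ (deleteAt G w).Reachable v u := by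
  have h := hr.symm
  rw [SimpleGraph.reachable_iff_reflTransGen] at h
  have key : ∀ z, Relation.ReflTransGen G.Adj w z →
      z = w ∨ ∃ u, G.Adj w u ∧ (deleteAt G w).Reachable u z := by
    intro z hz
    induction hz with
    | refl => exact Or.inl rfl
    | @tail b c hab hbc ih =>
      by_cases hbw : b = w
      · by_cases hcw : c = w
        · exact Or.inl hcw
        · exact Or.inr ⟨c, hbw ▸ hbc, SimpleGraph.Reachable.refl c⟩
      · rcases ih with h | ⟨u, hu1, hu2⟩
        · exact absurd h hbw
        · by_cases hcw : c = w
          · exact Or.inl hcw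
          · exact Or.inr ⟨u, hu1, hu2.trans (deleteAt_adj hbc hbw hcw).reachable⟩
  rcases key v h with h | ⟨u, hu1, hu2⟩
  · exact absurd h hv
  · exact ⟨u, hu1, hu2.symm⟩

/-- Reachability avoiding `w` transfers to `deleteAt G w`. -/
lemma reach_deleteAt_of_not_reach {w v z : V} (hr : G.Reachable v z)
    (hnw : ¬ G.Reachable v w) : (deleteAt G w).Reachable v z := by
  rw [SimpleGraph.reachable_iff_reflTransGen] at hr
  rw [SimpleGraph.reachable_iff_reflTransGen]
  rw [SimpleGraph.reachable_iff_reflTransGen] at hnw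
  induction hr with
  | refl => exact Relation.ReflTransGen.refl
  | @tail b c hab hbc ih =>
    have hbw : b ≠ w := fun h => hnw (h ▸ hab)
    have hcw : c ≠ w := fun h => hnw (h ▸ hab.tail hbc)
    exact ih.tail (deleteAt_adj hbc hbw hcw)

noncomputable def freshC (L : V → Finset ℕ) : ℕ :=
  (Finset.univ.sup fun v => (L v).sup id) + 1

lemma freshC_not_mem (L : V → Finset ℕ) : ∀ u, freshC L ∉ L u := by
  intro u hc
  have h1 : (L u).sup id ≤ Finset.univ.sup fun v => (L v).sup id :=
    Finset.le_sup (f := fun v => (L v).sup id) (Finset.mem_univ u)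
  have h2 : freshC L ≤ (L u).sup id := Finset.le_sup (f := id) hc
  unfold freshC at h2
  omega

/-- The edgeless case. -/
lemma edgeless_swappable (hE : ∀ u z, ¬ G.Adj u z)
    (hii : ∀ v, ∃ z, G.Reachable v z ∧ gdeg G z < (L z).card) : LSwappable G L := by
  have hne : ∀ v, (L v).Nonempty := by
    intro v
    obtain ⟨z, hrz, hslack⟩ := hii v
    have hzv : z = v := eq_of_reachable_isolated (fun y => hE v y) hrz
    subst hzv
    exact Finset.card_pos.mp (lt_of_le_of_lt (Nat.zero_le _) hslack)
  constructor
  · exact ⟨fun v => (hne v).choose, fun v => (hne v).choose_spec,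
      fun u z h => absurd h (hE u z)⟩
  · intro φ ψ hφ hψ
    suffices key : ∀ s : Finset V, ∀ φ, IsLColoring G L φ → (∀ v ∉ s, φ v = ψ v) →
        LEquiv G L φ ψ by
      exact key Finset.univ φ hφ (fun v hv => absurd (Finset.mem_univ v) hv)
    intro s
    induction s using Finset.induction with
    | empty =>
      intro φ hφ h
      have : φ = ψ := funext fun v => h v (Finset.notMem_empty v)
      exact this ▸ Relation.ReflTransGen.refl
    | @insert a s ha ih =>
      intro φ hφ h
      set φ₂ : V → ℕ := fun u => if u = a then ψ a else φ u with hφ₂def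
      have hswap : kempeSwap G φ (φ a) (ψ a) a = φ₂ := by
        funext u
        by_cases hu : u = a
        · subst hu
          have : (kempeGraph G φ (φ u) (ψ u)).Reachable u u := SimpleGraph.Reachable.refl u
          simp [kempeSwap, this, hφ₂def]
        · rw [kempeSwap_eq_of_not_reachable
            (fun hr => hu (eq_of_reachable_isolated (fun z hz => hE a z (kempeGraph_le G φ _ _ hz)) hr))]
          simp [hφ₂def, hu]
      have hφ₂col : IsLColoring G L φ₂ := by
        refine ⟨fun u => ?_, fun u z hadj => absurd hadj (hE u z)⟩
        by_cases hu : u = a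
        · simp only [hφ₂def, hu, if_pos rfl]
          exact hψ.1 a
        · simp only [hφ₂def, hu, if_neg, not_false_iff, if_false]
          exact hφ.1 u
      refine Relation.ReflTransGen.head ⟨hφ, hφ₂col, φ a, ψ a, a, hswap.symm⟩ (ih φ₂ hφ₂col ?_)
      intro v hv
      by_cases hva : v = a
      · simp [hφ₂def, hva]
      · simp only [hφ₂def, hva, if_neg, not_false_iff, if_false]
        exact h v (by simp [Finset.mem_insert, hva, hv])

/-- Main induction on the number of edges. -/
lemma main_induction : ∀ (n : ℕ) (G : SimpleGraph V) (L : V → Finset ℕ),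
    G.edgeSet.ncard ≤ n →
    (∀ v, gdeg G v ≤ (L v).card) →
    (∀ v, ∃ z, G.Reachable v z ∧ gdeg G z < (L z).card) →
    LSwappable G L := by
  intro n
  induction n with
  | zero =>
    intro G L hn h1 h2
    have hE : ∀ u z, ¬ G.Adj u z := by
      intro u z hadj
      have hmem : s(u,z) ∈ G.edgeSet := hadj
      have hpos : 0 < G.edgeSet.ncard := (Set.ncard_pos (Set.toFinite _)).mpr ⟨_, hmem⟩
      omega
    exact edgeless_swappable hE h2
  | succ n ih =>
    intro G L hn h1 h2
    by_cases hE : ∀ u z, ¬ G.Adj u z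
    · exact edgeless_swappable hE h2
    · push_neg at hE
      obtain ⟨u, z, hadj⟩ := hE
      obtain ⟨w, hru, hslack⟩ := h2 u
      have hwdeg : ∃ y, G.Adj w y := by
        by_cases huw : u = w
        · exact ⟨z, huw ▸ hadj⟩
        · exact adj_exists_of_reachable hru huw
      obtain ⟨y, hwy⟩ := hwdeg
      set c := freshC L with hcdef
      set L' := Function.update L w ({c} : Finset ℕ) with hL'def
      have hL'w : L' w = {c} := Function.update_self w _ L
      have hL'u : ∀ v, v ≠ w → L' v = L v := fun v hv => Function.update_of_ne hv _ _
      have hcnt : (deleteAt G w).edgeSet.ncard ≤ n := by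
        have hlt : (deleteAt G w).edgeSet.ncard < G.edgeSet.ncard := by
          apply Set.ncard_lt_ncard _ (Set.toFinite _)
          constructor
          · exact SimpleGraph.edgeSet_mono (deleteAt_le G w)
          · intro hsub
            have hmem : s(w,y) ∈ G.edgeSet := hwy
            have : (deleteAt G w).Adj w y := hsub hmem
            exact this.2.1 rfl
        omega
      have hi1 : ∀ v, gdeg (deleteAt G w) v ≤ (L' v).card := by
        intro v
        by_cases hv : v = w
        · subst hv
          rw [gdeg_deleteAt_self, hL'w]
          simp
        · rw [hL'u v hv]
          exact le_trans (gdeg_deleteAt_le G w v) (h1 v)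
      have hi2 : ∀ v, ∃ z, (deleteAt G w).Reachable v z ∧
          gdeg (deleteAt G w) z < (L' z).card := by
        intro v
        by_cases hv : v = w
        · subst hv
          refine ⟨v, SimpleGraph.Reachable.refl v, ?_⟩
          rw [gdeg_deleteAt_self, hL'w]
          simp
        · by_cases hvw : G.Reachable v w
          · obtain ⟨p, hp1, hp2⟩ := reach_nbr_of_reach hv hvw
            refine ⟨p, hp2, ?_⟩
            rw [hL'u p hp1.ne']
            exact lt_of_lt_of_le (gdeg_deleteAt_lt hp1.symm) (h1 p)
          · obtain ⟨p, hp1, hp2⟩ := h2 v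
            have hpw : p ≠ w := fun h => hvw (h ▸ hp1)
            refine ⟨p, reach_deleteAt_of_not_reach hp1 hvw, ?_⟩
            rw [hL'u p hpw]
            exact lt_of_le_of_lt (gdeg_deleteAt_le G w p) hp2
      exact lift_all c (freshC_not_mem L) hslack (ih (deleteAt G w) L' hcnt hi1 hi2)

end Main

end KempeAux

/-- **Lemma.** If `G` is connected, `|L(v)| ≥ deg_G(v)` for every vertex `v`, and
`|L(w)| > deg_G(w)` for some vertex `w`, then `G` is `L`-swappable. -/
theorem stmt_5 {V : Type*} [Fintype V] (G : SimpleGraph V)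
    (hconn : G.Connected) (L : V → Finset ℕ)
    (h1 : ∀ v, gdeg G v ≤ (L v).card)
    (h2 : ∃ w, gdeg G w < (L w).card) :
    LSwappable G L := by
  obtain ⟨w, hw⟩ := h2
  exact KempeAux.main_induction G.edgeSet.ncard G L le_rfl h1
    (fun v => ⟨w, hconn.preconnected v w, hw⟩)
end

section
/- Let G be the complete graph K_{k+1} with k ≥ 3, and let L be a k-assignment for G. If there exist vertices v and w with L(v) ≠ L(w), then G is L-swappable. -/
open SimpleGraph
open scoped Classical

-- ===== infrastructure =====
section Infra
variable {V : Type*} [DecidableEq V] (L : V → Finset ℕ)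

lemma isLColoring_top_iff {φ : V → ℕ} :
    IsLColoring (⊤ : SimpleGraph V) L φ ↔ (∀ v, φ v ∈ L v) ∧ Function.Injective φ := by
  constructor
  · rintro ⟨h1, h2⟩
    refine ⟨h1, fun a b hab => ?_⟩
    by_contra hne
    exact h2 (by simp [SimpleGraph.top_adj, hne] : (⊤ : SimpleGraph V).Adj a b) hab
  · rintro ⟨h1, h2⟩
    refine ⟨h1, fun a b hab hc => ?_⟩
    rw [SimpleGraph.top_adj] at hab
    exact hab (h2 hc)

lemma kempeSwap_swap_eq (φ : V → ℕ) (hinj : Function.Injective φ) (a b : V) (hab : a ≠ b) :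
    kempeSwap ⊤ φ (φ a) (φ b) a = φ ∘ (Equiv.swap a b) := by
  funext v
  unfold kempeSwap
  by_cases hva : v = a
  · subst hva
    rw [if_pos ⟨SimpleGraph.Reachable.refl _, rfl⟩]
    simp
  · by_cases hvb : v = b
    · have hne : φ v ≠ φ a := fun h => hva (hinj h)
      rw [if_neg (fun h => hne h.2)]
      have hreach : (kempeGraph ⊤ φ (φ a) (φ b)).Reachable a v := by
        rw [hvb]
        exact SimpleGraph.Adj.reachable ⟨by simpa using hab, Or.inl rfl, Or.inr rfl⟩
      rw [if_pos ⟨hreach, by rw [hvb]⟩, hvb]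
      simp
    · have h1 : φ v ≠ φ a := fun h => hva (hinj h)
      have h2 : φ v ≠ φ b := fun h => hvb (hinj h)
      rw [if_neg (fun h => h1 h.2), if_neg (fun h => h2 h.2)]
      simp [Equiv.swap_apply_of_ne_of_ne hva hvb]

lemma kempeSwap_recolor_eq (φ : V → ℕ) (hinj : Function.Injective φ) (a : V) (β : ℕ)
    (hβ : ∀ v, φ v ≠ β) :
    kempeSwap ⊤ φ (φ a) β a = Function.update φ a β := by
  funext v
  unfold kempeSwap
  by_cases hva : v = a
  · subst hva
    rw [if_pos ⟨SimpleGraph.Reachable.refl _, rfl⟩, Function.update_self]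
  · have h1 : φ v ≠ φ a := fun h => hva (hinj h)
    rw [if_neg (fun h => h1 h.2), if_neg (fun h => hβ v h.2), Function.update_of_ne hva]

/-- Both-ways Kempe step. -/
def MStep (φ ψ : V → ℕ) : Prop := KempeStep ⊤ L φ ψ ∧ KempeStep ⊤ L ψ φ

def MEquiv : (V → ℕ) → (V → ℕ) → Prop := Relation.ReflTransGen (MStep L)

lemma MEquiv.toLEquiv {φ ψ : V → ℕ} (h : MEquiv L φ ψ) : LEquiv ⊤ L φ ψ :=
  Relation.ReflTransGen.mono (fun _ _ h => h.1) _ _ h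

lemma MEquiv.symm {φ ψ : V → ℕ} (h : MEquiv L φ ψ) : MEquiv L ψ φ :=
  @Std.Symm.symm _ _ (@Relation.ReflTransGen.stdSymm _ _ ⟨fun _ _ h => ⟨h.2, h.1⟩⟩) _ _ h

lemma MEquiv.single {φ ψ : V → ℕ} (h : MStep L φ ψ) : MEquiv L φ ψ :=
  Relation.ReflTransGen.single h

lemma mstep_swap {φ : V → ℕ} (hφ : IsLColoring ⊤ L φ) (a b : V) (hab : a ≠ b)
    (h1 : φ b ∈ L a) (h2 : φ a ∈ L b) :
    MStep L φ (φ ∘ Equiv.swap a b) := by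
  obtain ⟨hmem, hinj⟩ := (isLColoring_top_iff L).1 hφ
  have hψ : IsLColoring ⊤ L (φ ∘ Equiv.swap a b) := by
    rw [isLColoring_top_iff]
    constructor
    · intro v
      by_cases hva : v = a
      · subst hva; simpa using h1
      · by_cases hvb : v = b
        · subst hvb; simpa using h2
        · simpa [Equiv.swap_apply_of_ne_of_ne hva hvb] using hmem v
    · exact hinj.comp (Equiv.injective _)
  have hinjψ : Function.Injective (φ ∘ Equiv.swap a b) := hinj.comp (Equiv.injective _)
  constructor
  · exact ⟨hφ, hψ, φ a, φ b, a, (kempeSwap_swap_eq φ hinj a b hab).symm⟩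
  · refine ⟨hψ, hφ, (φ ∘ Equiv.swap a b) a, (φ ∘ Equiv.swap a b) b, a, ?_⟩
    rw [kempeSwap_swap_eq _ hinjψ a b hab]
    funext v
    simp [Function.comp, Equiv.swap_apply_self]

lemma mstep_recolor {φ : V → ℕ} (hφ : IsLColoring ⊤ L φ) (a : V) (β : ℕ)
    (hβL : β ∈ L a) (hβ : ∀ v, φ v ≠ β) :
    MStep L φ (Function.update φ a β) := by
  obtain ⟨hmem, hinj⟩ := (isLColoring_top_iff L).1 hφ
  have hψinj : Function.Injective (Function.update φ a β) := by
    intro u w h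
    by_cases hu : u = a <;> by_cases hw : w = a
    · rw [hu, hw]
    · rw [hu] at h ⊢; rw [Function.update_self, Function.update_of_ne hw] at h
      exact absurd h.symm (hβ w)
    · rw [hw] at h ⊢; rw [Function.update_self, Function.update_of_ne hu] at h
      exact absurd h (hβ u)
    · rw [Function.update_of_ne hu, Function.update_of_ne hw] at h
      exact hinj h
  have hψ : IsLColoring ⊤ L (Function.update φ a β) := by
    rw [isLColoring_top_iff]
    refine ⟨fun v => ?_, hψinj⟩
    by_cases hva : v = a
    · subst hva; rw [Function.update_self]; exact hβL
    · rw [Function.update_of_ne hva]; exact hmem v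
  constructor
  · exact ⟨hφ, hψ, φ a, β, a, (kempeSwap_recolor_eq φ hinj a β hβ).symm⟩
  · refine ⟨hψ, hφ, (Function.update φ a β) a, φ a, a, ?_⟩
    have hcond : ∀ v, Function.update φ a β v ≠ φ a := by
      intro v
      by_cases hva : v = a
      · rw [hva, Function.update_self]; exact fun h => (hβ a) h.symm
      · rw [Function.update_of_ne hva]; exact fun h => hva (hinj h)
    rw [kempeSwap_recolor_eq _ hψinj a (φ a) hcond]
    funext v
    by_cases hva : v = a
    · subst hva; simp
    · simp [Function.update_of_ne hva]

end Infra

section CardHelp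
open Finset
variable {V : Type*} [Fintype V] [DecidableEq V]

lemma card_lt_one (σ τ σ' τ' : V → ℕ) (p : V)
    (h1 : ∀ v, σ' v ≠ τ' v → σ v ≠ τ v) (h2 : σ' p = τ' p) (hp : σ p ≠ τ p) :
    (Finset.univ.filter fun v => σ' v ≠ τ' v).card <
      (Finset.univ.filter fun v => σ v ≠ τ v).card := by
  apply Finset.card_lt_card
  have hsub : (Finset.univ.filter fun v => σ' v ≠ τ' v) ⊆
      (Finset.univ.filter fun v => σ v ≠ τ v) := by
    intro a ha
    simp only [Finset.mem_filter, Finset.mem_univ, true_and] at ha ⊢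
    exact h1 a ha
  refine (Finset.ssubset_iff_of_subset hsub).2 ⟨p, ?_, ?_⟩
  · simp only [Finset.mem_filter, Finset.mem_univ, true_and]; exact hp
  · simp only [Finset.mem_filter, Finset.mem_univ, true_and, not_not]
    exact h2

lemma card_lt_two_one (σ τ σ' τ' : V → ℕ) (p q r : V) (hpq : p ≠ q)
    (hp : σ p ≠ τ p) (hq : σ q ≠ τ q)
    (h1 : ∀ v, σ' v ≠ τ' v → v = r ∨ (σ v ≠ τ v ∧ v ≠ p ∧ v ≠ q)) :
    (Finset.univ.filter fun v => σ' v ≠ τ' v).card <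
      (Finset.univ.filter fun v => σ v ≠ τ v).card := by
  set D := Finset.univ.filter fun v => σ v ≠ τ v with hD
  set D' := Finset.univ.filter fun v => σ' v ≠ τ' v with hD'
  have hpD : p ∈ D := by simp [hD, hp]
  have hqD : q ∈ D := by simp [hD, hq]
  have hqe : q ∈ D.erase p := Finset.mem_erase.2 ⟨fun h => hpq h.symm, hqD⟩
  have hsub : D' ⊆ insert r ((D.erase p).erase q) := by
    intro a ha
    simp only [hD', Finset.mem_filter, Finset.mem_univ, true_and] at ha
    rcases h1 a ha with h | ⟨h, hap, haq⟩
    · exact Finset.mem_insert.2 (Or.inl h)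
    · exact Finset.mem_insert.2 (Or.inr (Finset.mem_erase.2 ⟨haq,
        Finset.mem_erase.2 ⟨hap, by simp [hD, h]⟩⟩))
  have h2 : ((D.erase p).erase q).card = D.card - 2 := by
    rw [Finset.card_erase_of_mem hqe, Finset.card_erase_of_mem hpD]
    omega
  have h3 : D'.card ≤ ((D.erase p).erase q).card + 1 :=
    (Finset.card_le_card hsub).trans (Finset.card_insert_le _ _)
  have h4 : 2 ≤ D.card := by
    have : ({p, q} : Finset V) ⊆ D := by
      intro a ha; rcases Finset.mem_insert.1 ha with h | h
      · exact h ▸ hpD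
      · exact (Finset.mem_singleton.1 h) ▸ hqD
    calc 2 = ({p, q} : Finset V).card := (Finset.card_pair hpq).symm
    _ ≤ D.card := Finset.card_le_card this
  omega

end CardHelp

lemma exists_coloring {k : ℕ} (hk : 3 ≤ k) (L : Fin (k+1) → Finset ℕ)
    (hL : ∀ v, (L v).card = k) (v w : Fin (k+1)) (hvw : L v ≠ L w) :
    ∃ φ, IsLColoring (⊤ : SimpleGraph (Fin (k+1))) L φ := by
  have hvw' : v ≠ w := fun h => hvw (by rw [h])
  obtain ⟨c, hcv, hcw⟩ : ∃ c, c ∈ L v ∧ c ∉ L w := by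
    by_contra h
    push_neg at h
    exact hvw (Finset.eq_of_subset_of_card_le (fun c hc => h c hc) (by rw [hL, hL]))
  set t : Fin (k+1) → Finset ℕ := fun x => if x = v then {c} else L x \ {c} with ht
  have htcard : ∀ x, x ≠ v → k - 1 ≤ (t x).card := by
    intro x hx
    have : t x = (L x).erase c := by simp [ht, hx, Finset.sdiff_singleton_eq_erase]
    rw [this]
    by_cases hc : c ∈ L x
    · rw [Finset.card_erase_of_mem hc, hL]
    · rw [Finset.erase_eq_of_notMem hc, hL]; omega
  have htw : t w = L w := by
    simp [ht, hvw'.symm, Finset.sdiff_singleton_eq_erase, Finset.erase_eq_of_notMem hcw]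
  have hcuniv : Fintype.card (Fin (k+1)) = k + 1 := Fintype.card_fin _
  have hall : ∀ S : Finset (Fin (k+1)), S.card ≤ (S.biUnion t).card := by
    intro S
    rcases Finset.eq_empty_or_nonempty S with hS | hS
    · simp [hS]
    by_cases hw : w ∈ S
    · have h1 : L w ⊆ S.biUnion t := htw ▸ Finset.subset_biUnion_of_mem t hw
      by_cases hSc : S.card ≤ k
      · have h2 := Finset.card_le_card h1
        rw [hL w] at h2
        omega
      · have hle := S.card_le_univ
        simp only [Finset.card_univ, hcuniv] at hle
        have hSk : S.card = k + 1 := by omega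
        have hSuniv : S = Finset.univ := Finset.eq_univ_of_card S (by rw [hSk, hcuniv])
        have hv : v ∈ S := hSuniv ▸ Finset.mem_univ v
        have h2 : insert c (L w) ⊆ S.biUnion t := by
          apply Finset.insert_subset
          · exact Finset.mem_biUnion.2 ⟨v, hv, by simp [ht]⟩
          · exact h1
        calc S.card = k + 1 := hSk
          _ = (insert c (L w)).card := by rw [Finset.card_insert_of_notMem hcw, hL]
          _ ≤ _ := Finset.card_le_card h2
    · have hSk : S.card ≤ k := by
        have : S ⊆ Finset.univ.erase w := fun a ha => Finset.mem_erase.2 ⟨fun h => hw (h ▸ ha), Finset.mem_univ a⟩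
        have := Finset.card_le_card this
        rw [Finset.card_erase_of_mem (Finset.mem_univ w), Finset.card_univ, hcuniv] at this
        omega
      by_cases hxv : ∀ x ∈ S, x = v
      · obtain ⟨x, hx⟩ := hS
        have hvS : v ∈ S := (hxv x hx) ▸ hx
        have h1 : S ⊆ {v} := fun a ha => Finset.mem_singleton.2 (hxv a ha)
        have h2 : ({c} : Finset ℕ) ⊆ S.biUnion t := by
          intro a ha
          exact Finset.mem_biUnion.2 ⟨v, hvS, by simpa [ht] using ha⟩
        calc S.card ≤ 1 := by simpa using Finset.card_le_card h1
          _ ≤ _ := by simpa using Finset.card_le_card h2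
      · push_neg at hxv
        obtain ⟨x, hxS, hxv⟩ := hxv
        have h1 : t x ⊆ S.biUnion t := Finset.subset_biUnion_of_mem t hxS
        by_cases hS1 : S.card ≤ k - 1
        · exact hS1.trans ((htcard x hxv).trans (Finset.card_le_card h1))
        · have hSk' : S.card = k := by omega
          have hSeq : S = Finset.univ.erase w := by
            apply Finset.eq_of_subset_of_card_le
            · exact fun a ha => Finset.mem_erase.2 ⟨fun h => hw (h ▸ ha), Finset.mem_univ a⟩
            · rw [Finset.card_erase_of_mem (Finset.mem_univ w), Finset.card_univ, hcuniv, hSk']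
              omega
          have hvS : v ∈ S := by
            rw [hSeq]; exact Finset.mem_erase.2 ⟨hvw', Finset.mem_univ v⟩
          have hcx : c ∉ t x := by simp [ht, hxv]
          have h2 : insert c (t x) ⊆ S.biUnion t := by
            apply Finset.insert_subset
            · exact Finset.mem_biUnion.2 ⟨v, hvS, by simp [ht]⟩
            · exact h1
          have := Finset.card_le_card h2
          rw [Finset.card_insert_of_notMem hcx] at this
          have := htcard x hxv
          omega
  obtain ⟨f, hfinj, hf⟩ := (Finset.all_card_le_biUnion_card_iff_exists_injective t).1 hall
  refine ⟨f, (isLColoring_top_iff L).2 ⟨fun x => ?_, hfinj⟩⟩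
  by_cases hx : x = v
  · subst hx
    have := hf x
    simp only [ht, if_pos rfl, Finset.mem_singleton] at this
    rw [this]; exact hcv
  · have := hf x
    simp only [ht, if_neg hx] at this
    exact (Finset.mem_sdiff.1 this).1

lemma top_connect {k : ℕ} (hk : 3 ≤ k) (L : Fin (k+1) → Finset ℕ)
    (hL : ∀ v, (L v).card = k) :
    ∀ σ τ, IsLColoring (⊤ : SimpleGraph (Fin (k+1))) L σ →
      IsLColoring (⊤ : SimpleGraph (Fin (k+1))) L τ → MEquiv L σ τ := by
  suffices H : ∀ N (σ τ : Fin (k+1) → ℕ),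
      IsLColoring (⊤ : SimpleGraph (Fin (k+1))) L σ →
      IsLColoring (⊤ : SimpleGraph (Fin (k+1))) L τ →
      (Finset.univ.filter fun v => σ v ≠ τ v).card ≤ N → MEquiv L σ τ by
    exact fun σ τ hσ hτ => H _ σ τ hσ hτ le_rfl
  intro N
  induction N with
  | zero =>
    intro σ τ hσ hτ hcard
    have : σ = τ := by
      funext v
      by_contra h
      have : v ∈ Finset.univ.filter fun v => σ v ≠ τ v := by simp [h]
      rw [Finset.card_eq_zero.1 (Nat.le_zero.1 hcard)] at this
      exact absurd this (Finset.notMem_empty v)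
    rw [this]
    exact Relation.ReflTransGen.refl
  | succ N ih =>
    intro σ τ hσ hτ hcard
    by_cases heq : ∀ v, σ v = τ v
    · rw [funext heq]
      exact Relation.ReflTransGen.refl
    push_neg at heq
    obtain ⟨u, hu⟩ := heq
    obtain ⟨hmσ, hiσ⟩ := (isLColoring_top_iff L).1 hσ
    obtain ⟨hmτ, hiτ⟩ := (isLColoring_top_iff L).1 hτ
    have hxLu : σ u ∈ L u := hmσ u
    have hcLu : τ u ∈ L u := hmτ u
    have key : ∀ σ' τ' : Fin (k+1) → ℕ, MEquiv L σ σ' → MEquiv L τ τ' →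
        IsLColoring (⊤ : SimpleGraph (Fin (k+1))) L σ' →
        IsLColoring (⊤ : SimpleGraph (Fin (k+1))) L τ' →
        (Finset.univ.filter fun v => σ' v ≠ τ' v).card <
          (Finset.univ.filter fun v => σ v ≠ τ v).card → MEquiv L σ τ := by
      intro σ' τ' h1 h2 h3 h4 h5
      exact (h1.trans (ih σ' τ' h3 h4 (by omega))).trans h2.symm
    -- Case 1 : the color τ u is unused in σ
    by_cases hc : ∃ b, σ b = τ u
    swap
    · push_neg at hc
      have m := mstep_recolor L hσ u (τ u) hcLu hc
      refine key _ τ (MEquiv.single L m) Relation.ReflTransGen.refl m.1.2.1 hτ ?_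
      refine card_lt_one σ τ _ τ u ?_ (by simp) hu
      intro v hv
      by_cases hvu : v = u
      · rw [hvu]; exact hu
      · rwa [Function.update_of_ne hvu] at hv
    -- Case 2 : the color σ u is unused in τ
    by_cases hx : ∃ a, τ a = σ u
    swap
    · push_neg at hx
      have m := mstep_recolor L hτ u (σ u) hxLu hx
      refine key σ _ Relation.ReflTransGen.refl (MEquiv.single L m) hσ m.1.2.1 ?_
      refine card_lt_one σ τ σ _ u ?_ (by simp) hu
      intro v hv
      by_cases hvu : v = u
      · rw [hvu]; exact hu
      · rwa [Function.update_of_ne hvu] at hv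
    obtain ⟨b, hb⟩ := hc
    obtain ⟨a, ha⟩ := hx
    have hbu : b ≠ u := fun h => hu (h ▸ hb)
    have hau : a ≠ u := fun h => hu (h ▸ ha).symm
    have hbD : σ b ≠ τ b := fun h => hbu (hiτ (h ▸ hb).symm ▸ rfl)
    have haD : σ a ≠ τ a := fun h => hau (hiσ (by rw [h, ha]))
    have evswap : ∀ (g : Fin (k+1) → ℕ) (p q v : Fin (k+1)), v ≠ p → v ≠ q →
        (g ∘ Equiv.swap p q) v = g v := fun g p q v h1 h2 => by
      rw [Function.comp_apply, Equiv.swap_apply_of_ne_of_ne h1 h2]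
    have evl : ∀ (g : Fin (k+1) → ℕ) (p q : Fin (k+1)), (g ∘ Equiv.swap p q) p = g q :=
      fun g p q => by rw [Function.comp_apply, Equiv.swap_apply_left]
    have evr : ∀ (g : Fin (k+1) → ℕ) (p q : Fin (k+1)), (g ∘ Equiv.swap p q) q = g p :=
      fun g p q => by rw [Function.comp_apply, Equiv.swap_apply_right]
    -- Case 3a : swap u and b in σ
    by_cases h3a : σ u ∈ L b
    · have m := mstep_swap L hσ u b hbu.symm (by rw [hb]; exact hcLu) h3a
      refine key _ τ (MEquiv.single L m) Relation.ReflTransGen.refl m.1.2.1 hτ ?_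
      refine card_lt_one σ τ _ τ u ?_ (by rw [evl, hb]) hu
      intro v hv
      by_cases hvu : v = u
      · rw [hvu]; exact hu
      by_cases hvb : v = b
      · rw [hvb]; exact hbD
      · rwa [evswap σ u b v hvu hvb] at hv
    -- Case 3b : swap u and a in τ
    by_cases h3b : τ u ∈ L a
    · have m := mstep_swap L hτ u a hau.symm (by rw [ha]; exact hxLu) h3b
      refine key σ _ Relation.ReflTransGen.refl (MEquiv.single L m) hσ m.1.2.1 ?_
      refine card_lt_one σ τ σ _ u ?_ (by rw [evl, ha]) hu
      intro v hv
      by_cases hvu : v = u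
      · rw [hvu]; exact hu
      by_cases hva : v = a
      · rw [hva]; exact haD
      · rwa [evswap τ u a v hvu hva] at hv
    -- Case 3c : recolor b to an unused color, then recolor u to τ u
    by_cases h3c : ∃ d ∈ L b, ∀ v', σ v' ≠ d
    · obtain ⟨d, hdL, hdnew⟩ := h3c
      have m1 := mstep_recolor L hσ b d hdL hdnew
      have hcond : ∀ v', Function.update σ b d v' ≠ τ u := by
        intro v'
        by_cases hvb : v' = b
        · rw [hvb, Function.update_self]
          exact fun h => hdnew b (hb.trans h.symm)
        · rw [Function.update_of_ne hvb]
          exact fun h => hvb (hiσ (h.trans hb.symm))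
      have m2 := mstep_recolor L m1.1.2.1 u (τ u) hcLu hcond
      refine key _ τ ((MEquiv.single L m1).trans (MEquiv.single L m2))
        Relation.ReflTransGen.refl m2.1.2.1 hτ ?_
      refine card_lt_one σ τ _ τ u ?_ (by rw [Function.update_self]) hu
      intro v hv
      by_cases hvu : v = u
      · rw [hvu]; exact hu
      by_cases hvb : v = b
      · rw [hvb]; exact hbD
      · rwa [Function.update_of_ne hvu, Function.update_of_ne hvb] at hv
    -- Case 3d : recolor a to an unused color, then recolor u to σ u (τ side)
    by_cases h3d : ∃ d ∈ L a, ∀ v', τ v' ≠ d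
    · obtain ⟨d, hdL, hdnew⟩ := h3d
      have m1 := mstep_recolor L hτ a d hdL hdnew
      have hcond : ∀ v', Function.update τ a d v' ≠ σ u := by
        intro v'
        by_cases hva : v' = a
        · rw [hva, Function.update_self]
          exact fun h => hdnew a (ha.trans h.symm)
        · rw [Function.update_of_ne hva]
          exact fun h => hva (hiτ (h.trans ha.symm))
      have m2 := mstep_recolor L m1.1.2.1 u (σ u) hxLu hcond
      refine key σ _ Relation.ReflTransGen.refl
        ((MEquiv.single L m1).trans (MEquiv.single L m2)) hσ m2.1.2.1 ?_
      refine card_lt_one σ τ σ _ u ?_ (by rw [Function.update_self]) hu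
      intro v hv
      by_cases hvu : v = u
      · rw [hvu]; exact hu
      by_cases hva : v = a
      · rw [hva]; exact haD
      · rwa [Function.update_of_ne hvu, Function.update_of_ne hva] at hv
    -- Case 3e : recolor u to an unused color, then recolor a to σ u
    by_cases h3e : ∃ γ ∈ L u, ∀ v', σ v' ≠ γ
    · obtain ⟨γ, hγL, hγnew⟩ := h3e
      have m1 := mstep_recolor L hσ u γ hγL hγnew
      have hcond : ∀ v', Function.update σ u γ v' ≠ σ u := by
        intro v'
        by_cases hvu : v' = u
        · rw [hvu, Function.update_self]; exact fun h => hγnew u h.symm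
        · rw [Function.update_of_ne hvu]; exact fun h => hvu (hiσ h)
      have m2 := mstep_recolor L m1.1.2.1 a (σ u) (by rw [← ha]; exact hmτ a) hcond
      refine key _ τ ((MEquiv.single L m1).trans (MEquiv.single L m2))
        Relation.ReflTransGen.refl m2.1.2.1 hτ ?_
      refine card_lt_one σ τ _ τ a ?_ (by rw [Function.update_self]; exact ha.symm) haD
      intro v hv
      by_cases hva : v = a
      · rw [hva]; exact haD
      by_cases hvu : v = u
      · rw [hvu]; exact hu
      · rwa [Function.update_of_ne hva, Function.update_of_ne hvu] at hv
    -- Case 3f : recolor u to an unused color, then recolor b to τ u  (τ side)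
    by_cases h3f : ∃ δ ∈ L u, ∀ v', τ v' ≠ δ
    · obtain ⟨δ, hδL, hδnew⟩ := h3f
      have m1 := mstep_recolor L hτ u δ hδL hδnew
      have hcond : ∀ v', Function.update τ u δ v' ≠ τ u := by
        intro v'
        by_cases hvu : v' = u
        · rw [hvu, Function.update_self]; exact fun h => hδnew u h.symm
        · rw [Function.update_of_ne hvu]; exact fun h => hvu (hiτ h)
      have m2 := mstep_recolor L m1.1.2.1 b (τ u) (by rw [← hb]; exact hmσ b) hcond
      refine key σ _ Relation.ReflTransGen.refl
        ((MEquiv.single L m1).trans (MEquiv.single L m2)) hσ m2.1.2.1 ?_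
      refine card_lt_one σ τ σ _ b ?_ (by rw [Function.update_self]; exact hb) hbD
      intro v hv
      by_cases hvb : v = b
      · rw [hvb]; exact hbD
      by_cases hvu : v = u
      · rw [hvu]; exact hu
      · rwa [Function.update_of_ne hvb, Function.update_of_ne hvu] at hv
    -- Case 3g : all easy moves blocked; derive structure of the lists
    push_neg at h3c h3d h3e h3f
    have hCσ : (Finset.univ.image σ).card = k + 1 := by
      rw [Finset.card_image_of_injective _ hiσ, Finset.card_univ, Fintype.card_fin]
    have hCτ : (Finset.univ.image τ).card = k + 1 := by
      rw [Finset.card_image_of_injective _ hiτ, Finset.card_univ, Fintype.card_fin]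
    have hmemim : ∀ (φ : Fin (k+1) → ℕ) (δ : ℕ), (∃ v', φ v' = δ) → δ ∈ Finset.univ.image φ :=
      fun φ δ h => Finset.mem_image.2 ⟨h.choose, Finset.mem_univ _, h.choose_spec⟩
    have hLb : ∀ δ, (∃ v', σ v' = δ) → δ ≠ σ u → δ ∈ L b := by
      have hsub : L b ⊆ (Finset.univ.image σ).erase (σ u) := by
        intro d hd
        exact Finset.mem_erase.2 ⟨fun h => h3a (h ▸ hd), hmemim σ d (h3c d hd)⟩
      have heq := Finset.eq_of_subset_of_card_le hsub
        (by rw [Finset.card_erase_of_mem (hmemim σ _ ⟨u, rfl⟩), hCσ, hL]; omega)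
      intro δ hδ hne
      rw [heq]
      exact Finset.mem_erase.2 ⟨hne, hmemim σ δ hδ⟩
    have hLa : ∀ δ, (∃ v', τ v' = δ) → δ ≠ τ u → δ ∈ L a := by
      have hsub : L a ⊆ (Finset.univ.image τ).erase (τ u) := by
        intro d hd
        exact Finset.mem_erase.2 ⟨fun h => h3b (h ▸ hd), hmemim τ d (h3d d hd)⟩
      have heq := Finset.eq_of_subset_of_card_le hsub
        (by rw [Finset.card_erase_of_mem (hmemim τ _ ⟨u, rfl⟩), hCτ, hL]; omega)
      intro δ hδ hne
      rw [heq]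
      exact Finset.mem_erase.2 ⟨hne, hmemim τ δ hδ⟩
    obtain ⟨e, heC, heL⟩ : ∃ e' ∈ Finset.univ.image σ, e' ∉ L u := by
      refine Finset.not_subset.1 (fun hss => ?_)
      have := Finset.card_le_card hss
      rw [hCσ, hL] at this
      omega
    obtain ⟨f, hfC, hfL⟩ : ∃ f' ∈ Finset.univ.image τ, f' ∉ L u := by
      refine Finset.not_subset.1 (fun hss => ?_)
      have := Finset.card_le_card hss
      rw [hCτ, hL] at this
      omega
    have hLuσeq : L u = (Finset.univ.image σ).erase e := by
      refine Finset.eq_of_subset_of_card_le (fun d hd => ?_)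
        (by rw [Finset.card_erase_of_mem heC, hCσ, hL]; omega)
      exact Finset.mem_erase.2 ⟨fun h => heL (h ▸ hd), hmemim σ d (h3e d hd)⟩
    have hLuτeq : L u = (Finset.univ.image τ).erase f := by
      refine Finset.eq_of_subset_of_card_le (fun d hd => ?_)
        (by rw [Finset.card_erase_of_mem hfC, hCτ, hL]; omega)
      exact Finset.mem_erase.2 ⟨fun h => hfL (h ▸ hd), hmemim τ d (h3f d hd)⟩
    have hLuσ : ∀ δ, (∃ v', σ v' = δ) → δ ≠ e → δ ∈ L u := by
      intro δ hδ hne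
      rw [hLuσeq]
      exact Finset.mem_erase.2 ⟨hne, hmemim σ δ hδ⟩
    have hLuτ : ∀ δ, (∃ v', τ v' = δ) → δ ≠ f → δ ∈ L u := by
      intro δ hδ hne
      rw [hLuτeq]
      exact Finset.mem_erase.2 ⟨hne, hmemim τ δ hδ⟩
    have hex : σ u ≠ e := fun h => heL (h ▸ hxLu)
    have hec : τ u ≠ e := fun h => heL (h ▸ hcLu)
    have hfx : σ u ≠ f := fun h => hfL (h ▸ hxLu)
    have hfc : τ u ≠ f := fun h => hfL (h ▸ hcLu)
    have hba : b ≠ a := by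
      intro h
      apply h3b
      rw [← h, ← hb]
      exact hmσ b
    -- Case 3g-i : σ a ∈ L u : swap (u,a) then (u,b) in σ
    by_cases hgi : σ a ∈ L u
    · have m1 := mstep_swap L hσ u a hau.symm hgi (hLa (σ u) ⟨a, ha⟩ hu)
      have e1b : (σ ∘ Equiv.swap u a) b = σ b := evswap σ u a b hbu hba
      have e1u : (σ ∘ Equiv.swap u a) u = σ a := evl σ u a
      have e1a : (σ ∘ Equiv.swap u a) a = σ u := evr σ u a
      have m2 := mstep_swap L m1.1.2.1 u b hbu.symm
        (by rw [e1b, hb]; exact hcLu)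
        (by rw [e1u]; exact hLb (σ a) ⟨a, rfl⟩ (fun h => hau (hiσ h)))
      refine key _ τ ((MEquiv.single L m1).trans (MEquiv.single L m2))
        Relation.ReflTransGen.refl m2.1.2.1 hτ ?_
      refine card_lt_one σ τ _ τ u ?_ (by rw [evl, e1b, hb]) hu
      intro v hv
      by_cases hvu : v = u
      · rw [hvu]; exact hu
      by_cases hvb : v = b
      · rw [hvb]; exact hbD
      by_cases hva : v = a
      · rw [hva]; exact haD
      · rwa [evswap _ u b v hvu hvb, evswap σ u a v hvu hva] at hv
    -- Case 3g-ii : τ b ∈ L u : swap (u,b) then (u,a) in τ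
    by_cases hgii : τ b ∈ L u
    · have m1 := mstep_swap L hτ u b hbu.symm hgii (hLb (τ u) ⟨b, hb⟩ (fun h => hu h.symm))
      have e1a : (τ ∘ Equiv.swap u b) a = τ a := evswap τ u b a hau (Ne.symm hba)
      have e1u : (τ ∘ Equiv.swap u b) u = τ b := evl τ u b
      have m2 := mstep_swap L m1.1.2.1 u a hau.symm
        (by rw [e1a, ha]; exact hxLu)
        (by rw [e1u]; exact hLa (τ b) ⟨b, rfl⟩ (fun h => hbu (hiτ h)))
      refine key σ _ Relation.ReflTransGen.refl
        ((MEquiv.single L m1).trans (MEquiv.single L m2)) hσ m2.1.2.1 ?_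
      refine card_lt_one σ τ σ _ u ?_ (by rw [evl, e1a, ha]) hu
      intro v hv
      by_cases hvu : v = u
      · rw [hvu]; exact hu
      by_cases hva : v = a
      · rw [hva]; exact haD
      by_cases hvb : v = b
      · rw [hvb]; exact hbD
      · rwa [evswap _ u a v hvu hva, evswap τ u b v hvu hvb] at hv
    -- Case 3g-iii : σ a = e and τ b = f
    have hea : σ a = e := by
      by_contra h
      exact hgi (hLuσ (σ a) ⟨a, rfl⟩ h)
    have hfb : τ b = f := by
      by_contra h
      exact hgii (hLuτ (τ b) ⟨b, rfl⟩ h)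
    by_cases hef : e = f
    swap
    -- Case A : e ≠ f; recolor (in τ) b → e, a → f, u → σ u
    · have henτ : ∀ v', τ v' ≠ e := fun v' h => heL (hLuτ e ⟨v', h⟩ hef)
      have m1 := mstep_recolor L hτ b e (hLb e ⟨a, hea⟩ (Ne.symm hex)) henτ
      have hcond2 : ∀ v', Function.update τ b e v' ≠ f := by
        intro v'
        by_cases hvb : v' = b
        · rw [hvb, Function.update_self]; exact hef
        · rw [Function.update_of_ne hvb]
          exact fun h => hvb (hiτ (h.trans hfb.symm))
      have m2 := mstep_recolor L m1.1.2.1 a f (hLa f ⟨b, hfb⟩ (Ne.symm hfc)) hcond2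
      have hcond3 : ∀ v', Function.update (Function.update τ b e) a f v' ≠ σ u := by
        intro v'
        by_cases hva : v' = a
        · rw [hva, Function.update_self]; exact Ne.symm hfx
        by_cases hvb : v' = b
        · rw [Function.update_of_ne hva, hvb, Function.update_self]; exact Ne.symm hex
        · rw [Function.update_of_ne hva, Function.update_of_ne hvb]
          exact fun h => hva (hiτ (h.trans ha.symm))
      have m3 := mstep_recolor L m2.1.2.1 u (σ u) hxLu hcond3
      refine key σ _ Relation.ReflTransGen.refl
        (((MEquiv.single L m1).trans (MEquiv.single L m2)).trans (MEquiv.single L m3))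
        hσ m3.1.2.1 ?_
      refine card_lt_one σ τ σ _ u ?_ (by rw [Function.update_self]) hu
      intro v hv
      by_cases hvu : v = u
      · rw [hvu]; exact hu
      by_cases hva : v = a
      · rw [hva]; exact haD
      by_cases hvb : v = b
      · rw [hvb]; exact hbD
      · rwa [Function.update_of_ne hvu, Function.update_of_ne hva,
          Function.update_of_ne hvb] at hv
    -- Case B : e = f
    · subst hef
      obtain ⟨y, hy⟩ : ∃ y, y ∉ ({u, b, a} : Finset (Fin (k+1))) := by
        by_contra h
        push_neg at h
        have hc1 := Finset.card_le_card
          (show (Finset.univ : Finset (Fin (k+1))) ⊆ {u, b, a} from fun z _ => h z)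
        have hc2 : ({u, b, a} : Finset (Fin (k+1))).card ≤ 3 := by
          refine le_trans (Finset.card_insert_le _ _) ?_
          have h5 := Finset.card_insert_le b ({a} : Finset (Fin (k+1)))
          simp only [Finset.card_singleton] at h5
          omega
        rw [Finset.card_univ, Fintype.card_fin] at hc1
        omega
      simp only [Finset.mem_insert, Finset.mem_singleton, not_or] at hy
      obtain ⟨hyu, hyb, hya⟩ := hy
      have hsx : σ y ≠ σ u := fun h => hyu (hiσ h)
      have hsc : σ y ≠ τ u := fun h => hyb (hiσ (by rw [h, ← hb]))
      have hse : σ y ≠ e := fun h => hya (hiσ (by rw [h, hea]))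
      have htc : τ y ≠ τ u := fun h => hyu (hiτ h)
      have hte : τ y ≠ e := fun h => hyb (hiτ (by rw [h, hfb]))
      have htx : τ y ≠ σ u := fun h => hya (hiτ (by rw [h, ha]))
      have himeq : Finset.univ.image σ = Finset.univ.image τ := by
        rw [← Finset.insert_erase heC, ← Finset.insert_erase hfC, ← hLuσeq, ← hLuτeq]
      have hτmem : ∀ δ, (∃ v', σ v' = δ) → ∃ v', τ v' = δ := by
        intro δ hδ
        have h1 := hmemim σ δ hδ
        rw [himeq] at h1
        obtain ⟨v', -, hv'⟩ := Finset.mem_image.1 h1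
        exact ⟨v', hv'⟩
      -- Case B1 : e ∈ L y : swaps (y,a), (u,a), (u,b) in σ
      by_cases hB1 : e ∈ L y
      · have m1 := mstep_swap L hσ y a hya (by rw [hea]; exact hB1)
          (hLa (σ y) (hτmem _ ⟨y, rfl⟩) hsc)
        have e1u : (σ ∘ Equiv.swap y a) u = σ u := evswap σ y a u (Ne.symm hyu) (Ne.symm hau)
        have e1b : (σ ∘ Equiv.swap y a) b = σ b := evswap σ y a b (Ne.symm hyb) hba
        have e1a : (σ ∘ Equiv.swap y a) a = σ y := evr σ y a
        have m2 := mstep_swap L m1.1.2.1 u a hau.symm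
          (by rw [e1a]; exact hLuσ (σ y) ⟨y, rfl⟩ hse)
          (by rw [e1u]; exact hLa (σ u) ⟨a, ha⟩ hu)
        have e2b : ((σ ∘ Equiv.swap y a) ∘ Equiv.swap u a) b = σ b := by
          rw [evswap _ u a b hbu hba, e1b]
        have e2u : ((σ ∘ Equiv.swap y a) ∘ Equiv.swap u a) u = σ y := by
          rw [evl, e1a]
        have e2a : ((σ ∘ Equiv.swap y a) ∘ Equiv.swap u a) a = σ u := by
          rw [evr, e1u]
        have m3 := mstep_swap L m2.1.2.1 u b hbu.symm
          (by rw [e2b, hb]; exact hcLu)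
          (by rw [e2u]; exact hLb (σ y) ⟨y, rfl⟩ hsx)
        refine key _ τ (((MEquiv.single L m1).trans (MEquiv.single L m2)).trans
          (MEquiv.single L m3)) Relation.ReflTransGen.refl m3.1.2.1 hτ ?_
        refine card_lt_two_one σ τ _ τ u a y hau.symm hu haD ?_
        intro v hv
        by_cases hvy : v = y
        · exact Or.inl hvy
        by_cases hvu : v = u
        · exfalso
          rw [hvu] at hv
          exact hv (by rw [evl, e2b, hb])
        by_cases hva : v = a
        · exfalso
          rw [hva] at hv
          exact hv (by rw [evswap _ u b a hau (Ne.symm hba), e2a, ha])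
        right
        refine ⟨?_, hvu, hva⟩
        by_cases hvb : v = b
        · rw [hvb]; exact hbD
        · rwa [evswap _ u b v hvu hvb, evswap _ u a v hvu hva,
            evswap σ y a v hvy hva] at hv
      -- Case B2 : τ u ∈ L y : swaps (b,y), (a,b), (u,a), (u,y) in σ
      by_cases hB2 : τ u ∈ L y
      · have m1 := mstep_swap L hσ b y (Ne.symm hyb)
          (hLb (σ y) ⟨y, rfl⟩ hsx) (by rw [hb]; exact hB2)
        have e1u : (σ ∘ Equiv.swap b y) u = σ u := evswap σ b y u (Ne.symm hbu) (Ne.symm hyu)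
        have e1a : (σ ∘ Equiv.swap b y) a = σ a := evswap σ b y a (Ne.symm hba) (Ne.symm hya)
        have e1b : (σ ∘ Equiv.swap b y) b = σ y := evl σ b y
        have e1y : (σ ∘ Equiv.swap b y) y = σ b := evr σ b y
        have m2 := mstep_swap L m1.1.2.1 a b (Ne.symm hba)
          (by rw [e1b]; exact hLa (σ y) (hτmem _ ⟨y, rfl⟩) hsc)
          (by rw [e1a, hea]; exact hLb e ⟨a, hea⟩ (Ne.symm hex))
        have e2u : ((σ ∘ Equiv.swap b y) ∘ Equiv.swap a b) u = σ u := by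
          rw [evswap _ a b u (Ne.symm hau) (Ne.symm hbu), e1u]
        have e2y : ((σ ∘ Equiv.swap b y) ∘ Equiv.swap a b) y = σ b := by
          rw [evswap _ a b y hya hyb, e1y]
        have e2a : ((σ ∘ Equiv.swap b y) ∘ Equiv.swap a b) a = σ y := by
          rw [evl, e1b]
        have m3 := mstep_swap L m2.1.2.1 u a hau.symm
          (by rw [e2a]; exact hLuσ (σ y) ⟨y, rfl⟩ hse)
          (by rw [e2u]; exact hLa (σ u) ⟨a, ha⟩ hu)
        have e3y : (((σ ∘ Equiv.swap b y) ∘ Equiv.swap a b) ∘ Equiv.swap u a) y = σ b := by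
          rw [evswap _ u a y hyu hya, e2y]
        have e3u : (((σ ∘ Equiv.swap b y) ∘ Equiv.swap a b) ∘ Equiv.swap u a) u = σ y := by
          rw [evl, e2a]
        have m4 := mstep_swap L m3.1.2.1 u y (Ne.symm hyu)
          (by rw [e3y, hb]; exact hcLu)
          (by rw [e3u]; exact hmσ y)
        refine key _ τ ((((MEquiv.single L m1).trans (MEquiv.single L m2)).trans
          (MEquiv.single L m3)).trans (MEquiv.single L m4)) Relation.ReflTransGen.refl
          m4.1.2.1 hτ ?_
        refine card_lt_one σ τ _ τ u ?_ (by rw [evl, e3y, hb]) hu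
        intro v hv
        by_cases hvu : v = u
        · rw [hvu]; exact hu
        by_cases hvy : v = y
        · rw [hvy] at hv ⊢
          rwa [evr, e3u] at hv
        by_cases hva : v = a
        · rw [hva]; exact haD
        by_cases hvb : v = b
        · rw [hvb]; exact hbD
        · rwa [evswap _ u y v hvu hvy, evswap _ u a v hvu hva,
            evswap _ a b v hva hvb, evswap σ b y v hvb hvy] at hv
      -- Case B3 : some color of L y unused in σ : 5 recolorings
      by_cases hB3 : ∃ γ ∈ L y, ∀ v', σ v' ≠ γ
      · obtain ⟨γ, hγL, hγn⟩ := hB3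
        have m1 := mstep_recolor L hσ y γ hγL hγn
        have hc2 : ∀ v', Function.update σ y γ v' ≠ σ y := by
          intro v'
          by_cases hvy : v' = y
          · rw [hvy, Function.update_self]; exact Ne.symm (hγn y)
          · rw [Function.update_of_ne hvy]; exact fun h => hvy (hiσ h)
        have m2 := mstep_recolor L m1.1.2.1 u (σ y) (hLuσ (σ y) ⟨y, rfl⟩ hse) hc2
        have hc3 : ∀ v', Function.update (Function.update σ y γ) u (σ y) v' ≠ σ u := by
          intro v'
          by_cases hvu : v' = u
          · rw [hvu, Function.update_self]; exact hsx
          by_cases hvy : v' = y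
          · rw [Function.update_of_ne hvu, hvy, Function.update_self]
            exact Ne.symm (hγn u)
          · rw [Function.update_of_ne hvu, Function.update_of_ne hvy]
            exact fun h => hvu (hiσ h)
        have m3 := mstep_recolor L m2.1.2.1 a (σ u) (hLa (σ u) ⟨a, ha⟩ hu) hc3
        have hc4 : ∀ v', Function.update (Function.update (Function.update σ y γ) u (σ y))
            a (σ u) v' ≠ e := by
          intro v'
          by_cases hva : v' = a
          · rw [hva, Function.update_self]; exact hex
          by_cases hvu : v' = u
          · rw [Function.update_of_ne hva, hvu, Function.update_self]; exact hse
          by_cases hvy : v' = y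
          · rw [Function.update_of_ne hva, Function.update_of_ne hvu, hvy,
              Function.update_self]
            exact fun h => (hγn a) (hea.trans h.symm)
          · rw [Function.update_of_ne hva, Function.update_of_ne hvu,
              Function.update_of_ne hvy]
            exact fun h => hva (hiσ (h.trans hea.symm))
        have m4 := mstep_recolor L m3.1.2.1 b e (hLb e ⟨a, hea⟩ (Ne.symm hex)) hc4
        have hc5 : ∀ v', Function.update (Function.update (Function.update
            (Function.update σ y γ) u (σ y)) a (σ u)) b e v' ≠ τ u := by
          intro v'
          by_cases hvb : v' = b
          · rw [hvb, Function.update_self]; exact Ne.symm hec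
          by_cases hva : v' = a
          · rw [Function.update_of_ne hvb, hva, Function.update_self]; exact hu
          by_cases hvu : v' = u
          · rw [Function.update_of_ne hvb, Function.update_of_ne hva, hvu,
              Function.update_self]
            exact hsc
          by_cases hvy : v' = y
          · rw [Function.update_of_ne hvb, Function.update_of_ne hva,
              Function.update_of_ne hvu, hvy, Function.update_self]
            exact fun h => (hγn b) (hb.trans h.symm)
          · rw [Function.update_of_ne hvb, Function.update_of_ne hva,
              Function.update_of_ne hvu, Function.update_of_ne hvy]
            exact fun h => hvb (hiσ (h.trans hb.symm))
        have m5 := mstep_recolor L m4.1.2.1 u (τ u) hcLu hc5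
        refine key _ τ (((((MEquiv.single L m1).trans (MEquiv.single L m2)).trans
          (MEquiv.single L m3)).trans (MEquiv.single L m4)).trans (MEquiv.single L m5))
          Relation.ReflTransGen.refl m5.1.2.1 hτ ?_
        refine card_lt_two_one σ τ _ τ u a y hau.symm hu haD ?_
        intro v hv
        by_cases hvy : v = y
        · exact Or.inl hvy
        by_cases hvu : v = u
        · exfalso; rw [hvu] at hv; exact hv (by rw [Function.update_self])
        by_cases hva : v = a
        · exfalso; rw [hva] at hv
          exact hv (by rw [Function.update_of_ne hau, Function.update_of_ne (Ne.symm hba),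
            Function.update_self, ha])
        right
        refine ⟨?_, hvu, hva⟩
        by_cases hvb : v = b
        · rw [hvb]; exact hbD
        · rwa [Function.update_of_ne hvu, Function.update_of_ne hvb,
            Function.update_of_ne hva, Function.update_of_ne hvu,
            Function.update_of_ne hvy] at hv
      -- Case B4 : impossible : L y would be too small
      · exfalso
        push_neg at hB3
        have hsub : L y ⊆ ((Finset.univ.image σ).erase e).erase (τ u) := by
          intro γ hγ
          exact Finset.mem_erase.2 ⟨fun h => hB2 (h ▸ hγ),
            Finset.mem_erase.2 ⟨fun h => hB1 (h ▸ hγ), hmemim σ γ (hB3 γ hγ)⟩⟩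
        have hc1 := Finset.card_le_card hsub
        rw [Finset.card_erase_of_mem (Finset.mem_erase.2 ⟨hec, hmemim σ (τ u) ⟨b, hb⟩⟩),
          Finset.card_erase_of_mem heC, hCσ, hL] at hc1
        omega

/-- **Lemma.** Let `G = K_{k+1}` with `k ≥ 3` and let `L` be a `k`-assignment.  If
`L(v) ≠ L(w)` for some vertices `v, w`, then `G` is `L`-swappable. -/
theorem stmt_18 (k : ℕ) (hk : 3 ≤ k)
    (L : Fin (k + 1) → Finset ℕ) (hL : ∀ v, (L v).card = k)
    (v w : Fin (k + 1)) (hvw : L v ≠ L w) :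
    LSwappable (⊤ : SimpleGraph (Fin (k + 1))) L := by
  refine ⟨exists_coloring hk L hL v w hvw, fun φ ψ hφ hψ => ?_⟩
  exact MEquiv.toLEquiv L (top_connect hk L hL φ ψ hφ hψ)
end
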